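/- arXiv:0903.2917 — 7 statements merged into one kernel-verified Lean document; each statement's English description precedes it below -/
import Mathlib

section
/- Let (W,+,≤) be a positive ordered abelian semigroup and let x, y ∈ W. Then the following are equivalent: (i) there exists a positive integer k such that (k+1)x ≤ ky; (ii) there exists a positive integer k₀ such that (k+1)x ≤ ky for every k ≥ k₀; (iii) x ∝ y and f(x) < f(y) for every state f on W normalized at y. -/
open scoped ENNReal

namespace Stmt0

variable {W : Type*} [AddCommSemigroup W] [PartialOrder W]

/-- `rep n x` is the `(n+1)`-fold sum `x + x + ⋯ + x`, so that `rep n x = (n+1)·x`. -/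
def rep : ℕ → W → W
  | 0, x => x
  | n + 1, x => rep n x + x

/-- A state on `W` normalized at `y` : an additive, order preserving map into `[0,∞]`
sending `y` to `1`. -/
structure IsStateAt (f : W → ℝ≥0∞) (y : W) : Prop where
  additive : ∀ a b : W, f (a + b) = f a + f b
  mono : ∀ a b : W, a ≤ b → f a ≤ f b
  normalized : f y = 1

section AuxM
variable {M : Type*} [AddCommMonoid M] [PartialOrder M] [IsOrderedAddMonoid M]

lemma smul_mono_idx (hpos : ∀ a : M, 0 ≤ a) {m n : ℕ} (h : m ≤ n) (a : M) :
    m • a ≤ n • a := by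
  obtain ⟨j, rfl⟩ := Nat.exists_eq_add_of_le h
  rw [add_nsmul]
  exact le_add_of_nonneg_right (hpos _)

lemma smul_mono_elem {a b : M} (h : a ≤ b) (n : ℕ) : n • a ≤ n • b := by
  induction n with
  | zero => simp
  | succ k ih => rw [succ_nsmul, succ_nsmul]; exact add_le_add ih h

-- cross lemma
lemma cross (hpos : ∀ a : M, 0 ≤ a) {x y : M}
    (h1 : ∀ k : ℕ, ¬ ((k + 2) • x ≤ (k + 1) • y))
    {a b n : ℕ} (hn : 1 ≤ n) (h : a • y + n • x ≤ b • y) : a + n ≤ b := by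
  by_contra hc
  push_neg at hc  -- b < a + n
  rcases le_or_gt b a with hba | hab
  · -- case b ≤ a : a•y + n•x ≤ a•y
    have key : a • y + n • x ≤ a • y :=
      h.trans (smul_mono_idx hpos hba y)
    have iter : ∀ m : ℕ, a • y + (m * n) • x ≤ a • y := by
      intro m
      induction m with
      | zero => simp
      | succ k ih =>
        have : a • y + ((k + 1) * n) • x = (a • y + (k * n) • x) + n • x := by
          rw [Nat.succ_mul, add_nsmul, add_assoc]
        rw [this]
        calc (a • y + (k * n) • x) + n • x ≤ a • y + n • x :=
              add_le_add ih le_rfl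
          _ ≤ a • y := key
    have hfin : (a + 2) • x ≤ (a + 1) • y := by
      have h2 : ((a + 2) * n) • x ≤ a • y :=
        le_trans (le_add_of_nonneg_left (hpos (a • y))) (iter (a + 2))
      calc (a + 2) • x ≤ ((a + 2) * n) • x :=
            smul_mono_idx hpos (Nat.le_mul_of_pos_right _ hn) x
        _ ≤ a • y := h2
        _ ≤ (a + 1) • y := smul_mono_idx hpos (Nat.le_succ a) y
    exact h1 a hfin
  · -- case a < b < a + n
    obtain ⟨d, hd1, hdn, hb⟩ : ∃ d, 1 ≤ d ∧ d < n ∧ b = a + d :=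
      ⟨b - a, by omega, by omega, by omega⟩
    have iter : ∀ m : ℕ, a • y + (m * n) • x ≤ (a + m * d) • y := by
      intro m
      induction m with
      | zero => simp
      | succ k ih =>
        have e1 : a • y + ((k + 1) * n) • x = (a • y + (k * n) • x) + n • x := by
          rw [Nat.succ_mul, add_nsmul, add_assoc]
        rw [e1]
        calc (a • y + (k * n) • x) + n • x ≤ (a + k * d) • y + n • x :=
              add_le_add ih le_rfl
          _ = (k * d) • y + (a • y + n • x) := by
              rw [add_nsmul]; rw [add_comm (a • y) ((k*d) • y), add_assoc]
          _ ≤ (k * d) • y + b • y := add_le_add le_rfl h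
          _ = (a + (k + 1) * d) • y := by
              rw [← add_nsmul]; congr 1; rw [hb]; ring
    set m := a + 1 with hm
    have key : (m * n) • x ≤ (a + m * d) • y :=
      le_trans (le_add_of_nonneg_left (hpos (a • y))) (iter m)
    have hmd : 1 * 1 ≤ m * d := Nat.mul_le_mul (by omega) hd1
    have hK1 : 1 ≤ a + m * d := by omega
    set K := a + m * d - 1 with hK
    have hgoal : (K + 2) • x ≤ (K + 1) • y := by
      have h2 : K + 2 ≤ m * n := by
        have : m * d + m ≤ m * n := by
          calc m * d + m = m * (d + 1) := by ring
            _ ≤ m * n := Nat.mul_le_mul_left _ (by omega)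
        omega
      calc (K + 2) • x ≤ (m * n) • x := smul_mono_idx hpos h2 x
        _ ≤ (a + m * d) • y := key
        _ = (K + 1) • y := by congr 1; omega
    exact h1 K hgoal

-- order reflection on multiples of y
lemma yrefl (hpos : ∀ a : M, 0 ≤ a) {x y : M}
    (h1 : ∀ k : ℕ, ¬ ((k + 2) • x ≤ (k + 1) • y))
    {N : ℕ} (hx : x ≤ (N + 1) • y)
    {n m : ℕ} (h : n • y ≤ m • y) : n ≤ m := by
  by_contra hc
  push_neg at hc  -- m < n
  rcases Nat.eq_zero_or_pos m with hm0 | hm1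
  · subst hm0
    have hy0 : y = 0 := by
      have h0 : y ≤ 0 := by
        calc y = 1 • y := (one_nsmul y).symm
          _ ≤ n • y := smul_mono_idx hpos (by omega) y
          _ ≤ 0 • y := h
          _ = 0 := zero_nsmul y
      exact le_antisymm h0 (hpos y)
    have hx0 : x = 0 := by
      have : x ≤ 0 := by rw [← smul_zero (N+1), ← hy0]; exact hx
      exact le_antisymm this (hpos x)
    exact h1 0 (by rw [hx0, smul_zero]; exact hpos _)
  · set d := n - m with hd
    have hd1 : 1 ≤ d := by omega
    have iter : ∀ k : ℕ, (m + k * d) • y ≤ m • y := by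
      intro k
      induction k with
      | zero => simp
      | succ j ih =>
        have e1 : (m + (j + 1) * d) • y = (m + j * d) • y + d • y := by
          rw [← add_nsmul]; congr 1; ring
        rw [e1]
        calc (m + j * d) • y + d • y ≤ m • y + d • y := add_le_add ih le_rfl
          _ = n • y := by rw [← add_nsmul]; congr 1; omega
          _ ≤ m • y := h
    set k := (m + 1) * (N + 1) with hk
    have hgoal : ((m - 1) + 2) • x ≤ ((m - 1) + 1) • y := by
      have e2 : ((m-1) + 2) = m + 1 := by omega
      have e3 : ((m-1) + 1) = m := by omega
      rw [e2, e3]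
      calc (m + 1) • x ≤ (m + 1) • ((N + 1) • y) := smul_mono_elem hx (m+1)
        _ = ((N + 1) * (m + 1)) • y := (mul_nsmul y _ _).symm
        _ ≤ (m + k * d) • y := smul_mono_idx hpos (by
            have h5 : k ≤ k * d := Nat.le_mul_of_pos_right _ hd1
            have h6 : (N + 1) * (m + 1) = k := by rw [hk]; ring
            omega) y
        _ ≤ m • y := iter k
    exact h1 (m - 1) hgoal


def Sext (S : AddSubmonoid M) (w : M) : AddSubmonoid M where
  carrier := {u | ∃ a ∈ S, ∃ n : ℕ, u = a + n • w}
  zero_mem' := ⟨0, S.zero_mem, 0, by simp⟩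
  add_mem' := by
    rintro u v ⟨a, ha, n, rfl⟩ ⟨b, hb, m, rfl⟩
    exact ⟨a + b, S.add_mem ha hb, n + m, by rw [add_nsmul]; abel⟩

lemma mem_Sext {S : AddSubmonoid M} {w u : M} :
    u ∈ Sext S w ↔ ∃ a ∈ S, ∃ n : ℕ, u = a + n • w := Iff.rfl

noncomputable def tval (S : AddSubmonoid M) (f : M → ℝ≥0∞) (w : M) : ℝ≥0∞ :=
  sInf {v | ∃ c ∈ S, ∃ d ∈ S, ∃ k : ℕ,
    c + (k + 1) • w ≤ d ∧ f c ≠ ∞ ∧ v = (f d - f c) / ((k + 1 : ℕ) : ℝ≥0∞)}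

lemma combineK (hpos : ∀ a : M, 0 ≤ a) {a b c d w : M} {n m k : ℕ}
    (hrel : a + n • w ≤ b + m • w) (hcon : c + k • w ≤ d) :
    (k • a + m • c) + (k * n) • w ≤ k • b + m • d := by
  have hrel' : k • a + (k * n) • w ≤ k • b + (k * m) • w := by
    have h := smul_mono_elem hrel k
    rw [smul_add, smul_add, smul_smul, smul_smul] at h
    exact h
  have hcon' : m • c + (m * k) • w ≤ m • d := by
    have h := smul_mono_elem hcon m
    rw [smul_add, smul_smul] at h
    exact h
  calc (k • a + m • c) + (k * n) • w = (k • a + (k * n) • w) + m • c := by abel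
    _ ≤ (k • b + (k * m) • w) + m • c := add_le_add hrel' le_rfl
    _ = k • b + (m • c + (m * k) • w) := by rw [mul_comm k m]; abel
    _ ≤ k • b + m • d := add_le_add le_rfl hcon'

lemma f_smul {S : AddSubmonoid M} {f : M → ℝ≥0∞} (hf0 : f 0 = 0)
    (haddf : ∀ a ∈ S, ∀ b ∈ S, f (a + b) = f a + f b)
    {a : M} (ha : a ∈ S) (n : ℕ) : f (n • a) = n * f a := by
  induction n with
  | zero => simp [hf0]
  | succ k ih =>
    rw [succ_nsmul, haddf _ (S.nsmul_mem ha k) _ ha, ih]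
    push_cast; ring

lemma compat (hpos : ∀ a : M, 0 ≤ a) (S : AddSubmonoid M) (f : M → ℝ≥0∞)
    (hf0 : f 0 = 0)
    (haddf : ∀ a ∈ S, ∀ b ∈ S, f (a + b) = f a + f b)
    (hmono : ∀ a ∈ S, ∀ b ∈ S, a ≤ b → f a ≤ f b) (w : M)
    {a b : M} (ha : a ∈ S) (hb : b ∈ S) {n m : ℕ}
    (hrel : a + n • w ≤ b + m • w) :
    f a + n * tval S f w ≤ f b + m * tval S f w := by
  set t := tval S f w with ht
  rcases eq_or_ne (f b) ∞ with hfb | hfb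
  · rw [hfb, top_add]; exact le_top
  cases m with
  | zero =>
    rw [zero_nsmul, add_zero] at hrel
    simp only [Nat.cast_zero, zero_mul, add_zero]
    cases n with
    | zero =>
      rw [zero_nsmul, add_zero] at hrel
      simpa using hmono _ ha _ hb hrel
    | succ n' =>
      have haw : a ≤ b := le_trans (le_add_of_nonneg_right (hpos _)) hrel
      have hab : f a ≤ f b := hmono _ ha _ hb haw
      have hfa : f a ≠ ∞ := ne_top_of_le_ne_top hfb hab
      have htv : t ≤ (f b - f a) / ((n' + 1 : ℕ) : ℝ≥0∞) :=
        sInf_le ⟨a, ha, b, hb, n', hrel, hfa, rfl⟩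
      have hn0 : ((n' + 1 : ℕ) : ℝ≥0∞) ≠ 0 := by
        exact_mod_cast Nat.succ_ne_zero n'
      calc f a + ((n' + 1 : ℕ) : ℝ≥0∞) * t
          ≤ f a + ((n' + 1 : ℕ) : ℝ≥0∞) * ((f b - f a) / ((n' + 1 : ℕ) : ℝ≥0∞)) :=
            add_le_add le_rfl (mul_le_mul_right htv _)
        _ = f a + (f b - f a) := by
            rw [ENNReal.mul_div_cancel hn0 (ENNReal.natCast_ne_top _)]
        _ = f b := add_tsub_cancel_of_le hab
  | succ m' =>
    have hm0 : ((m' + 1 : ℕ) : ℝ≥0∞) ≠ 0 := by exact_mod_cast Nat.succ_ne_zero m'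
    rcases eq_or_ne t ∞ with htop | htop
    · rw [htop, ENNReal.mul_top hm0, add_top]; exact le_top
    -- per-constraint bound
    have bound : ∀ c, c ∈ S → ∀ d, d ∈ S → ∀ k : ℕ, c + (k + 1) • w ≤ d → f c ≠ ∞ →
        f a + (n : ℝ≥0∞) * t ≤
          f b + ((m' + 1 : ℕ) : ℝ≥0∞) * ((f d - f c) / ((k + 1 : ℕ) : ℝ≥0∞)) := by
      intro c hc d hd k hcon hfc
      have hk0 : ((k + 1 : ℕ) : ℝ≥0∞) ≠ 0 := by exact_mod_cast Nat.succ_ne_zero k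
      have hktop : ((k + 1 : ℕ) : ℝ≥0∞) ≠ ∞ := ENNReal.natCast_ne_top _
      rcases eq_or_ne (f d) ∞ with hfd | hfd
      · rw [hfd, ENNReal.top_sub hfc, ENNReal.top_div_of_ne_top hktop,
          ENNReal.mul_top hm0, add_top]
        exact le_top
      -- all finite
      have hcd_le : c ≤ d := le_trans (le_add_of_nonneg_right (hpos _)) hcon
      have hfcd : f c ≤ f d := hmono _ hc _ hd hcd_le
      have hK := combineK hpos hrel hcon
      have hc' : (k + 1) • a + (m' + 1) • c ∈ S :=
        S.add_mem (S.nsmul_mem ha _) (S.nsmul_mem hc _)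
      have hd' : (k + 1) • b + (m' + 1) • d ∈ S :=
        S.add_mem (S.nsmul_mem hb _) (S.nsmul_mem hd _)
      have hWle : (k + 1) • a + (m' + 1) • c ≤ (k + 1) • b + (m' + 1) • d :=
        le_trans (le_add_of_nonneg_right (hpos _)) hK
      have hN1 : ((k + 1 : ℕ) : ℝ≥0∞) * f a + ((m' + 1 : ℕ) : ℝ≥0∞) * f c ≤
          ((k + 1 : ℕ) : ℝ≥0∞) * f b + ((m' + 1 : ℕ) : ℝ≥0∞) * f d := by
        have h := hmono _ hc' _ hd' hWle
        rwa [haddf _ (S.nsmul_mem ha _) _ (S.nsmul_mem hc _),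
          haddf _ (S.nsmul_mem hb _) _ (S.nsmul_mem hd _),
          f_smul hf0 haddf ha, f_smul hf0 haddf hb,
          f_smul hf0 haddf hc, f_smul hf0 haddf hd] at h
      set e := f d - f c with he
      have hfde : f c + e = f d := add_tsub_cancel_of_le hfcd
      have hMfc_top : ((m' + 1 : ℕ) : ℝ≥0∞) * f c ≠ ∞ :=
        ENNReal.mul_ne_top (ENNReal.natCast_ne_top _) hfc
      have hD'split : ((k + 1 : ℕ) : ℝ≥0∞) * f b + ((m' + 1 : ℕ) : ℝ≥0∞) * f d =
          (((k + 1 : ℕ) : ℝ≥0∞) * f b + ((m' + 1 : ℕ) : ℝ≥0∞) * e) +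
            ((m' + 1 : ℕ) : ℝ≥0∞) * f c := by
        rw [← hfde, mul_add]; ring
      have hRHS : ((k + 1 : ℕ) : ℝ≥0∞) *
          (f b + ((m' + 1 : ℕ) : ℝ≥0∞) * (e / ((k + 1 : ℕ) : ℝ≥0∞))) =
          ((k + 1 : ℕ) : ℝ≥0∞) * f b + ((m' + 1 : ℕ) : ℝ≥0∞) * e := by
        rw [mul_add, mul_left_comm, ENNReal.mul_div_cancel hk0 hktop]
      cases n with
      | zero =>
        simp only [Nat.cast_zero, zero_mul, add_zero]
        rw [← ENNReal.mul_le_mul_iff_right hk0 hktop (b := f a), hRHS]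
        have : ((k + 1 : ℕ) : ℝ≥0∞) * f a + ((m' + 1 : ℕ) : ℝ≥0∞) * f c ≤
            (((k + 1 : ℕ) : ℝ≥0∞) * f b + ((m' + 1 : ℕ) : ℝ≥0∞) * e) +
              ((m' + 1 : ℕ) : ℝ≥0∞) * f c := by rw [← hD'split]; exact hN1
        exact (ENNReal.add_le_add_iff_right hMfc_top).mp this
      | succ n' =>
        have hfa : f a ≠ ∞ := by
          have hD'top : ((k + 1 : ℕ) : ℝ≥0∞) * f b + ((m' + 1 : ℕ) : ℝ≥0∞) * f d ≠ ∞ :=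
            ENNReal.add_ne_top.mpr ⟨ENNReal.mul_ne_top (ENNReal.natCast_ne_top _) hfb,
              ENNReal.mul_ne_top (ENNReal.natCast_ne_top _) hfd⟩
          intro hfa
          apply hD'top
          have : ((k + 1 : ℕ) : ℝ≥0∞) * f a = ∞ := by rw [hfa, ENNReal.mul_top hk0]
          exact eq_top_iff.mpr (le_trans (le_of_eq this.symm)
            (le_trans le_self_add hN1))
        set C' := ((k + 1 : ℕ) : ℝ≥0∞) * f a + ((m' + 1 : ℕ) : ℝ≥0∞) * f c with hC'
        set D' := ((k + 1 : ℕ) : ℝ≥0∞) * f b + ((m' + 1 : ℕ) : ℝ≥0∞) * f d with hD'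
        have hC'top : C' ≠ ∞ :=
          ENNReal.add_ne_top.mpr ⟨ENNReal.mul_ne_top (ENNReal.natCast_ne_top _) hfa,
            hMfc_top⟩
        -- the new constraint
        have hprod : (k + 1) * (n' + 1) - 1 + 1 = (k + 1) * (n' + 1) :=
          Nat.succ_pred_eq_of_pos (Nat.mul_pos (Nat.succ_pos k) (Nat.succ_pos n'))
        have hfc' : f ((k + 1) • a + (m' + 1) • c) = C' := by
          rw [haddf _ (S.nsmul_mem ha _) _ (S.nsmul_mem hc _),
            f_smul hf0 haddf ha, f_smul hf0 haddf hc]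
        have hfd' : f ((k + 1) • b + (m' + 1) • d) = D' := by
          rw [haddf _ (S.nsmul_mem hb _) _ (S.nsmul_mem hd _),
            f_smul hf0 haddf hb, f_smul hf0 haddf hd]
        have hmem : (D' - C') / (((k + 1) * (n' + 1) : ℕ) : ℝ≥0∞) ∈
            {v | ∃ c ∈ S, ∃ d ∈ S, ∃ k : ℕ,
              c + (k + 1) • w ≤ d ∧ f c ≠ ∞ ∧ v = (f d - f c) / ((k + 1 : ℕ) : ℝ≥0∞)} := by
          refine ⟨(k + 1) • a + (m' + 1) • c, hc', (k + 1) • b + (m' + 1) • d, hd',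
            (k + 1) * (n' + 1) - 1, ?_, ?_, ?_⟩
          · rw [hprod]; exact hK
          · rw [hfc']; exact hC'top
          · rw [hfc', hfd', hprod]
        have htv1 : t ≤ (D' - C') / (((k + 1) * (n' + 1) : ℕ) : ℝ≥0∞) := sInf_le hmem
        have hprod0 : (((k + 1) * (n' + 1) : ℕ) : ℝ≥0∞) ≠ 0 :=
          Nat.cast_ne_zero.mpr (Nat.mul_pos (Nat.succ_pos k) (Nat.succ_pos n')).ne'
        have step1 : f a + ((n' + 1 : ℕ) : ℝ≥0∞) * t ≤ f a + ((n' + 1 : ℕ) : ℝ≥0∞) *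
            ((D' - C') / (((k + 1) * (n' + 1) : ℕ) : ℝ≥0∞)) :=
          add_le_add le_rfl (mul_le_mul_right htv1 _)
        have hEq : ((k + 1 : ℕ) : ℝ≥0∞) * (f a + ((n' + 1 : ℕ) : ℝ≥0∞) *
              ((D' - C') / (((k + 1) * (n' + 1) : ℕ) : ℝ≥0∞))) =
            ((k + 1 : ℕ) : ℝ≥0∞) *
              (f b + ((m' + 1 : ℕ) : ℝ≥0∞) * (e / ((k + 1 : ℕ) : ℝ≥0∞))) := by
          rw [hRHS]
          have h1 : ((k + 1 : ℕ) : ℝ≥0∞) * (((n' + 1 : ℕ) : ℝ≥0∞) *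
              ((D' - C') / (((k + 1) * (n' + 1) : ℕ) : ℝ≥0∞))) = D' - C' := by
            rw [← mul_assoc, ← Nat.cast_mul,
              ENNReal.mul_div_cancel hprod0 (ENNReal.natCast_ne_top _)]
          rw [mul_add, h1]
          have hCD : C' ≤ D' := hN1
          have hcancel : (((k + 1 : ℕ) : ℝ≥0∞) * f a + (D' - C')) +
                ((m' + 1 : ℕ) : ℝ≥0∞) * f c =
              ((((k + 1 : ℕ) : ℝ≥0∞) * f b + ((m' + 1 : ℕ) : ℝ≥0∞) * e)) +
                ((m' + 1 : ℕ) : ℝ≥0∞) * f c := by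
            calc (((k + 1 : ℕ) : ℝ≥0∞) * f a + (D' - C')) + ((m' + 1 : ℕ) : ℝ≥0∞) * f c
                = C' + (D' - C') := by rw [hC']; ring
              _ = D' := add_tsub_cancel_of_le hCD
              _ = ((((k + 1 : ℕ) : ℝ≥0∞) * f b + ((m' + 1 : ℕ) : ℝ≥0∞) * e)) +
                  ((m' + 1 : ℕ) : ℝ≥0∞) * f c := by rw [hD']; exact hD'split
          rw [add_comm (((k + 1 : ℕ) : ℝ≥0∞) * f a + (D' - C')) _,
            add_comm ((((k + 1 : ℕ) : ℝ≥0∞) * f b + ((m' + 1 : ℕ) : ℝ≥0∞) * e)) _]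
            at hcancel
          exact (ENNReal.add_right_inj hMfc_top).mp hcancel
        exact le_trans step1 ((ENNReal.mul_le_mul_iff_right hk0 hktop).mp (le_of_eq hEq))
    -- assemble via epsilon argument
    apply ENNReal.le_of_forall_pos_le_add
    intro ε hε _
    have hmtop : ((m' + 1 : ℕ) : ℝ≥0∞) ≠ ∞ := ENNReal.natCast_ne_top _
    have hεm : (0 : ℝ≥0∞) < (ε : ℝ≥0∞) / ((m' + 1 : ℕ) : ℝ≥0∞) :=
      ENNReal.div_pos (by exact_mod_cast hε.ne') hmtop
    have hlt2 : t < t + (ε : ℝ≥0∞) / ((m' + 1 : ℕ) : ℝ≥0∞) :=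
      ENNReal.lt_add_right htop hεm.ne'
    have hsinf : sInf {v | ∃ c ∈ S, ∃ d ∈ S, ∃ k : ℕ,
        c + (k + 1) • w ≤ d ∧ f c ≠ ∞ ∧ v = (f d - f c) / ((k + 1 : ℕ) : ℝ≥0∞)} = t := by
      rw [ht, tval]
    obtain ⟨v, hvmem, hvlt⟩ := sInf_lt_iff.mp (hsinf ▸ hlt2)
    obtain ⟨c, hc, d, hd, k, hcon, hfc, rfl⟩ := hvmem
    calc f a + (n : ℝ≥0∞) * t
        ≤ f b + ((m' + 1 : ℕ) : ℝ≥0∞) * ((f d - f c) / ((k + 1 : ℕ) : ℝ≥0∞)) :=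
          bound c hc d hd k hcon hfc
      _ ≤ f b + ((m' + 1 : ℕ) : ℝ≥0∞) * (t + (ε : ℝ≥0∞) / ((m' + 1 : ℕ) : ℝ≥0∞)) :=
          add_le_add le_rfl (mul_le_mul_right hvlt.le _)
      _ = f b + ((m' + 1 : ℕ) : ℝ≥0∞) * t + (ε : ℝ≥0∞) := by
          rw [mul_add, ENNReal.mul_div_cancel hm0 hmtop, ← add_assoc]

noncomputable def fext (S : AddSubmonoid M) (f : M → ℝ≥0∞) (w : M) (u : M) : ℝ≥0∞ :=
  sInf {r | ∃ a ∈ S, ∃ n : ℕ, u = a + n • w ∧ r = f a + n * tval S f w}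

lemma fext_eval (hpos : ∀ a : M, 0 ≤ a) (S : AddSubmonoid M) (f : M → ℝ≥0∞)
    (hf0 : f 0 = 0)
    (haddf : ∀ a ∈ S, ∀ b ∈ S, f (a + b) = f a + f b)
    (hmono : ∀ a ∈ S, ∀ b ∈ S, a ≤ b → f a ≤ f b) (w : M)
    {a : M} (ha : a ∈ S) (n : ℕ) :
    fext S f w (a + n • w) = f a + n * tval S f w := by
  apply le_antisymm
  · exact sInf_le ⟨a, ha, n, rfl, rfl⟩
  · apply le_sInf
    rintro r ⟨a', ha', n', heq, rfl⟩
    exact compat hpos S f hf0 haddf hmono w ha ha' (le_of_eq heq)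

lemma step (hpos : ∀ a : M, 0 ≤ a) (S : AddSubmonoid M) (f : M → ℝ≥0∞)
    (hf0 : f 0 = 0)
    (haddf : ∀ a ∈ S, ∀ b ∈ S, f (a + b) = f a + f b)
    (hmono : ∀ a ∈ S, ∀ b ∈ S, a ≤ b → f a ≤ f b) (w : M) :
    ∃ f' : M → ℝ≥0∞,
      (∀ a ∈ S, f' a = f a) ∧ f' w = tval S f w ∧ f' 0 = 0 ∧
      (∀ a ∈ Sext S w, ∀ b ∈ Sext S w, f' (a + b) = f' a + f' b) ∧
      (∀ a ∈ Sext S w, ∀ b ∈ Sext S w, a ≤ b → f' a ≤ f' b) := by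
  refine ⟨fext S f w, ?_, ?_, ?_, ?_, ?_⟩
  · intro a ha
    have h := fext_eval hpos S f hf0 haddf hmono w ha 0
    simpa using h
  · have h := fext_eval hpos S f hf0 haddf hmono w S.zero_mem 1
    simpa [hf0] using h
  · have h := fext_eval hpos S f hf0 haddf hmono w S.zero_mem 0
    simpa [hf0] using h
  · rintro u ⟨a, ha, n, rfl⟩ v ⟨b, hb, m, rfl⟩
    have heq : (a + n • w) + (b + m • w) = (a + b) + (n + m) • w := by
      rw [add_nsmul]; abel
    rw [heq, fext_eval hpos S f hf0 haddf hmono w (S.add_mem ha hb) (n + m),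
      fext_eval hpos S f hf0 haddf hmono w ha n,
      fext_eval hpos S f hf0 haddf hmono w hb m, haddf _ ha _ hb]
    push_cast; ring
  · rintro u ⟨a, ha, n, rfl⟩ v ⟨b, hb, m, rfl⟩ hle
    rw [fext_eval hpos S f hf0 haddf hmono w ha n,
      fext_eval hpos S f hf0 haddf hmono w hb m]
    exact compat hpos S f hf0 haddf hmono w ha hb hle


lemma Sext_le (S : AddSubmonoid M) (w : M) : S ≤ Sext S w :=
  fun a ha => ⟨a, ha, 0, by simp⟩

structure PState (x y : M) where
  S : AddSubmonoid M
  f : M → ℝ≥0∞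
  f0 : f 0 = 0
  addf : ∀ a ∈ S, ∀ b ∈ S, f (a + b) = f a + f b
  monof : ∀ a ∈ S, ∀ b ∈ S, a ≤ b → f a ≤ f b
  hy : y ∈ S
  hfy : f y = 1
  hx : x ∈ S
  hfx : 1 ≤ f x

def PLe {x y : M} (p q : PState x y) : Prop :=
  p.S ≤ q.S ∧ ∀ a ∈ p.S, q.f a = p.f a

lemma PLe_refl {x y : M} (p : PState x y) : PLe p p := ⟨le_rfl, fun _ _ => rfl⟩

lemma PLe_trans {x y : M} {p q r : PState x y} (h1 : PLe p q) (h2 : PLe q r) :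
    PLe p r :=
  ⟨le_trans h1.1 h2.1, fun a ha => (h2.2 a (h1.1 ha)).trans (h1.2 a ha)⟩

lemma pchain (x y : M) (c : Set (PState x y)) (hc : IsChain PLe c)
    (p₀ : PState x y) : ∃ ub, ∀ p ∈ c, PLe p ub := by
  classical
  rcases c.eq_empty_or_nonempty with rfl | ⟨q₀, hq₀⟩
  · exact ⟨p₀, by simp⟩
  have hdir : ∀ p ∈ c, ∀ q ∈ c, ∃ s ∈ c, PLe p s ∧ PLe q s := by
    intro p hp q hq
    rcases eq_or_ne p q with rfl | hne
    · exact ⟨p, hp, PLe_refl p, PLe_refl p⟩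
    · rcases hc hp hq hne with h | h
      · exact ⟨q, hq, h, PLe_refl q⟩
      · exact ⟨p, hp, PLe_refl p, h⟩
  set Sub : AddSubmonoid M := {
    carrier := ⋃ p ∈ c, (p.S : Set M)
    zero_mem' := Set.mem_biUnion hq₀ q₀.S.zero_mem
    add_mem' := by
      intro a b ha hb
      obtain ⟨_, ⟨p, rfl⟩, _, ⟨hp, rfl⟩, hap⟩ := ha
      obtain ⟨_, ⟨q, rfl⟩, _, ⟨hq, rfl⟩, hbq⟩ := hb
      obtain ⟨s, hs, hps, hqs⟩ := hdir p hp q hq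
      exact Set.mem_biUnion hs (s.S.add_mem (hps.1 hap) (hqs.1 hbq)) } with hSub
  have memSub : ∀ u : M, u ∈ Sub ↔ ∃ p ∈ c, u ∈ p.S := by
    intro u
    constructor
    · rintro ⟨_, ⟨p, rfl⟩, _, ⟨hp, rfl⟩, hup⟩; exact ⟨p, hp, hup⟩
    · rintro ⟨p, hp, hup⟩; exact Set.mem_biUnion hp hup
  set fub : M → ℝ≥0∞ := fun u => sInf {r | ∃ p ∈ c, u ∈ p.S ∧ r = p.f u} with hfub
  have eval : ∀ p ∈ c, ∀ u ∈ p.S, fub u = p.f u := by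
    intro p hp u hu
    simp only [hfub]
    apply le_antisymm
    · exact sInf_le ⟨p, hp, hu, rfl⟩
    apply le_sInf
    rintro r ⟨q, hq, huq, rfl⟩
    rcases eq_or_ne p q with rfl | hne
    · exact le_rfl
    rcases hc hp hq hne with h | h
    · rw [h.2 u hu]
    · rw [← h.2 u huq]
  refine ⟨⟨Sub, fub, ?_, ?_, ?_, ?_, ?_, ?_, ?_⟩, ?_⟩
  · rw [eval q₀ hq₀ 0 q₀.S.zero_mem]; exact q₀.f0
  · intro a ha b hb
    obtain ⟨p, hp, hap⟩ := (memSub a).mp ha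
    obtain ⟨q, hq, hbq⟩ := (memSub b).mp hb
    obtain ⟨s, hs, hps, hqs⟩ := hdir p hp q hq
    have has : a ∈ s.S := hps.1 hap
    have hbs : b ∈ s.S := hqs.1 hbq
    rw [eval s hs _ (s.S.add_mem has hbs), eval s hs a has, eval s hs b hbs]
    exact s.addf a has b hbs
  · intro a ha b hb hle
    obtain ⟨p, hp, hap⟩ := (memSub a).mp ha
    obtain ⟨q, hq, hbq⟩ := (memSub b).mp hb
    obtain ⟨s, hs, hps, hqs⟩ := hdir p hp q hq
    have has : a ∈ s.S := hps.1 hap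
    have hbs : b ∈ s.S := hqs.1 hbq
    rw [eval s hs a has, eval s hs b hbs]
    exact s.monof a has b hbs hle
  · exact (memSub y).mpr ⟨q₀, hq₀, q₀.hy⟩
  · rw [eval q₀ hq₀ y q₀.hy]; exact q₀.hfy
  · exact (memSub x).mpr ⟨q₀, hq₀, q₀.hx⟩
  · rw [eval q₀ hq₀ x q₀.hx]; exact q₀.hfx
  · intro p hp
    exact ⟨fun a ha => (memSub a).mpr ⟨p, hp, ha⟩, fun a ha => eval p hp a ha⟩

theorem exists_state_ge (hpos : ∀ a : M, 0 ≤ a) (x y : M)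
    (h1 : ∀ k : ℕ, ¬ ((k + 2) • x ≤ (k + 1) • y))
    (N : ℕ) (hx : x ≤ (N + 1) • y) :
    ∃ g : M → ℝ≥0∞, (∀ a b : M, g (a + b) = g a + g b) ∧
      (∀ a b : M, a ≤ b → g a ≤ g b) ∧ g y = 1 ∧ 1 ≤ g x := by
  classical
  set S₁ := AddSubmonoid.closure ({y} : Set M) with hS₁
  set f₁ : M → ℝ≥0∞ := fun u => sInf {r | ∃ n : ℕ, n • y = u ∧ r = (n : ℝ≥0∞)} with hf₁
  have hrefl : ∀ {n m : ℕ}, n • y ≤ m • y → n ≤ m := fun h => yrefl hpos h1 hx h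
  have f₁eval : ∀ n : ℕ, f₁ (n • y) = n := by
    intro n
    simp only [hf₁]
    apply le_antisymm
    · exact sInf_le ⟨n, rfl, rfl⟩
    apply le_sInf
    rintro r ⟨m, hm, rfl⟩
    have hnm : n = m := le_antisymm (hrefl (le_of_eq hm.symm)) (hrefl (le_of_eq hm))
    exact le_of_eq (by rw [hnm])
  have f₁0 : f₁ 0 = 0 := by have h := f₁eval 0; simpa using h
  have mem₁ : ∀ u : M, u ∈ S₁ ↔ ∃ n : ℕ, n • y = u := fun u =>
    AddSubmonoid.mem_closure_singleton
  have f₁add : ∀ a ∈ S₁, ∀ b ∈ S₁, f₁ (a + b) = f₁ a + f₁ b := by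
    intro a ha b hb
    obtain ⟨n, rfl⟩ := (mem₁ a).mp ha
    obtain ⟨m, rfl⟩ := (mem₁ b).mp hb
    rw [← add_nsmul, f₁eval, f₁eval, f₁eval]
    push_cast; ring
  have f₁mono : ∀ a ∈ S₁, ∀ b ∈ S₁, a ≤ b → f₁ a ≤ f₁ b := by
    intro a ha b hb hle
    obtain ⟨n, rfl⟩ := (mem₁ a).mp ha
    obtain ⟨m, rfl⟩ := (mem₁ b).mp hb
    rw [f₁eval, f₁eval]
    exact_mod_cast hrefl hle
  obtain ⟨f₂, hf₂S, hf₂w, hf₂0, hf₂add, hf₂mono⟩ := step hpos S₁ f₁ f₁0 f₁add f₁mono x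
  have ht1 : 1 ≤ tval S₁ f₁ x := by
    apply le_sInf
    rintro r ⟨cc, hcc, dd, hdd, k, hcon, hfc, rfl⟩
    obtain ⟨a', rfl⟩ := (mem₁ cc).mp hcc
    obtain ⟨b', rfl⟩ := (mem₁ dd).mp hdd
    have hcross : a' + (k + 1) ≤ b' := cross hpos h1 (by omega) hcon
    rw [f₁eval, f₁eval]
    rw [ENNReal.le_div_iff_mul_le
      (Or.inl (Nat.cast_ne_zero.mpr (Nat.succ_ne_zero k)))
      (Or.inl (ENNReal.natCast_ne_top _)), one_mul, ← ENNReal.natCast_sub]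
    exact_mod_cast (by omega : (k + 1) ≤ b' - a')
  have hyS : y ∈ S₁ := AddSubmonoid.subset_closure rfl
  have hf₂y : f₂ y = 1 := by
    rw [hf₂S y hyS]
    have h := f₁eval 1
    simpa using h
  set p0 : PState x y := {
    S := Sext S₁ x
    f := f₂
    f0 := hf₂0
    addf := hf₂add
    monof := hf₂mono
    hy := Sext_le S₁ x hyS
    hfy := hf₂y
    hx := ⟨0, S₁.zero_mem, 1, by simp⟩
    hfx := by rw [hf₂w]; exact ht1 } with hp0
  obtain ⟨p, hmax⟩ := exists_maximal_of_chains_bounded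
    (fun c hc => pchain x y c hc p0) (fun h1 h2 => PLe_trans h1 h2)
  have hS_top : ∀ u : M, u ∈ p.S := by
    intro u
    by_contra hu
    obtain ⟨f', hf'S, hf'w, hf'0, hf'add, hf'mono⟩ :=
      step hpos p.S p.f p.f0 p.addf p.monof u
    set q : PState x y := {
      S := Sext p.S u
      f := f'
      f0 := hf'0
      addf := hf'add
      monof := hf'mono
      hy := Sext_le p.S u p.hy
      hfy := by rw [hf'S y p.hy]; exact p.hfy
      hx := Sext_le p.S u p.hx
      hfx := by rw [hf'S x p.hx]; exact p.hfx } with hq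
    have hpq : PLe p q := ⟨Sext_le p.S u, fun a ha => hf'S a ha⟩
    have hqp := hmax q hpq
    exact hu (hqp.1 ⟨0, p.S.zero_mem, 1, by simp⟩)
  exact ⟨p.f, fun a b => p.addf a (hS_top a) b (hS_top b),
    fun a b h => p.monof a (hS_top a) b (hS_top b) h, p.hfy, p.hfx⟩

end AuxM

section WSide

def oadd : Option W → Option W → Option W
  | none, b => b
  | some a, none => some a
  | some a, some b => some (a + b)

def ole : Option W → Option W → Prop
  | none, _ => True
  | some _, none => False
  | some a, some b => a ≤ b

lemma oadd_assoc (a b c : Option W) : oadd (oadd a b) c = oadd a (oadd b c) := by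
  cases a <;> cases b <;> cases c <;> simp only [oadd] <;> rw [add_assoc]

lemma oadd_comm (a b : Option W) : oadd a b = oadd b a := by
  cases a <;> cases b <;> simp only [oadd] <;> rw [add_comm]

instance oAdd : Add (Option W) := ⟨oadd⟩
instance oZero : Zero (Option W) := ⟨none⟩

def oAddCommMonoid : AddCommMonoid (Option W) where
  add_assoc := oadd_assoc
  zero_add := fun _ => rfl
  add_zero := fun a => by cases a <;> rfl
  add_comm := oadd_comm
  nsmul := nsmulRec
  nsmul_zero := fun _ => rfl
  nsmul_succ := fun _ _ => rfl

instance oLE : LE (Option W) := ⟨ole⟩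

def oPartialOrder : PartialOrder (Option W) where
  le := ole
  lt := fun a b => ole a b ∧ ¬ ole b a
  lt_iff_le_not_ge := fun _ _ => Iff.rfl
  le_refl := fun a => by cases a with
    | none => trivial
    | some a => exact le_refl a
  le_trans := by
    intro a b c hab hbc
    cases a with
    | none => trivial
    | some a => cases b with
      | none => exact hab.elim
      | some b => cases c with
        | none => exact hbc.elim
        | some c => exact le_trans (hab : a ≤ b) (hbc : b ≤ c)
  le_antisymm := by
    intro a b hab hba
    cases a with
    | none => cases b with
      | none => rfl
      | some b => exact hba.elim
    | some a => cases b with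
      | none => exact hab.elim
      | some b => exact congrArg some (le_antisymm (hab : a ≤ b) (hba : b ≤ a))

def oOrdered (hadd : ∀ x y z : W, x ≤ y → x + z ≤ y + z)
    (hpos : ∀ x z : W, x ≤ x + z) :
    @IsOrderedAddMonoid (Option W) oAddCommMonoid oPartialOrder.toPreorder :=
  letI := (oAddCommMonoid : AddCommMonoid (Option W))
  letI := (oPartialOrder : PartialOrder (Option W))
  { add_le_add_left := by
       have key : ∀ a b : Option W, a ≤ b → ∀ c, c + a ≤ c + b := by
        intro a b hab c
        cases a with
        | none => cases b with
          | none => cases c with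
            | none => trivial
            | some c => exact le_refl c
          | some b => cases c with
            | none => trivial
            | some c => exact hpos c b
        | some a => cases b with
          | none => exact hab.elim
          | some b => cases c with
            | none => exact (hab : a ≤ b)
            | some c =>
              show c + a ≤ c + b
              rw [add_comm c a, add_comm c b]
              exact hadd _ _ _ (hab : a ≤ b)
       intro a b hab c
       rw [add_comm a c, add_comm b c]
       exact key a b hab c }


lemma add_le_add4 (hadd : ∀ x y z : W, x ≤ y → x + z ≤ y + z) {a b c d : W} (h1 : a ≤ b) (h2 : c ≤ d) : a + c ≤ b + d := by
  calc a + c ≤ b + c := hadd _ _ _ h1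
    _ = c + b := add_comm _ _
    _ ≤ d + b := hadd _ _ _ h2
    _ = b + d := add_comm _ _

lemma rep_add (x : W) (m n : ℕ) : rep (m + n + 1) x = rep m x + rep n x := by
  induction n with
  | zero => rfl
  | succ n ih =>
    have h1 : rep (m + (n + 1) + 1) x = rep (m + n + 1) x + x := rfl
    have h2 : rep (n + 1) x = rep n x + x := rfl
    rw [h1, h2, ih, add_assoc]

lemma rep_mono_idx (hpos : ∀ x z : W, x ≤ x + z) {m n : ℕ} (h : m ≤ n) (x : W) : rep m x ≤ rep n x := by
  rcases Nat.eq_or_lt_of_le h with rfl | hlt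
  · exact le_rfl
  · obtain ⟨j, rfl⟩ : ∃ j, n = m + j + 1 := ⟨n - m - 1, by omega⟩
    rw [rep_add]
    exact hpos _ _

lemma rep_mono_elem (hadd : ∀ x y z : W, x ≤ y → x + z ≤ y + z) {a b : W} (h : a ≤ b) (n : ℕ) : rep n a ≤ rep n b := by
  induction n with
  | zero => exact h
  | succ n ih => exact add_le_add4 hadd ih h

lemma rep_rep (x : W) (m n : ℕ) : rep m (rep n x) = rep (m * n + m + n) x := by
  induction m with
  | zero =>
    have h0 : 0 * n + 0 + n = n := by omega
    rw [h0]
    rfl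
  | succ m ih =>
    have h1 : rep (m + 1) (rep n x) = rep m (rep n x) + rep n x := rfl
    rw [h1, ih, ← rep_add]
    congr 1
    ring

lemma one_two (hadd : ∀ x y z : W, x ≤ y → x + z ≤ y + z)
    (hpos : ∀ x z : W, x ≤ x + z) (x y : W) (k : ℕ)
    (h : rep (k + 1) x ≤ rep k y) :
    ∀ m, (k + 2) * (k + 2) ≤ m → rep (m + 1) x ≤ rep m y := by
  intro m hm
  have hCpos : 0 < k + 1 := Nat.succ_pos k
  have hdm := Nat.div_add_mod (m + 1) (k + 1)
  have hmod := Nat.mod_lt (m + 1) hCpos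
  have hqC : k + 1 ≤ (m + 1) / (k + 1) := by
    rw [Nat.le_div_iff_mul_le hCpos]
    have hsq : (k + 1) * (k + 1) ≤ (k + 2) * (k + 2) :=
      Nat.mul_le_mul (by omega) (by omega)
    omega
  obtain ⟨q', hq⟩ : ∃ q', (m + 1) / (k + 1) = q' + 1 := ⟨(m + 1) / (k + 1) - 1, by omega⟩
  rw [hq] at hdm hqC
  have e1 : (k + 1) * (q' + 1) = q' * k + q' + k + 1 := by ring
  calc rep (m + 1) x ≤ rep (q' * (k + 1) + q' + (k + 1)) x := by
        apply rep_mono_idx hpos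
        have e2 : q' * (k + 1) = q' * k + q' := by ring
        omega
    _ = rep q' (rep (k + 1) x) := (rep_rep x q' (k + 1)).symm
    _ ≤ rep q' (rep k y) := rep_mono_elem hadd h q'
    _ = rep (q' * k + q' + k) y := rep_rep y q' k
    _ ≤ rep m y := by
        apply rep_mono_idx hpos
        omega

lemma f_rep {f : W → ℝ≥0∞} {y : W} (hf : IsStateAt f y) (z : W) (n : ℕ) :
    f (rep n z) = ((n : ℝ≥0∞) + 1) * f z := by
  induction n with
  | zero =>
    show f z = (((0 : ℕ) : ℝ≥0∞) + 1) * f z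
    rw [Nat.cast_zero, zero_add, one_mul]
  | succ n ih =>
    have h1 : rep (n + 1) z = rep n z + z := rfl
    rw [h1, hf.additive, ih]
    push_cast
    ring

lemma states_lt (x y : W) (k : ℕ) (h : rep (k + 1) x ≤ rep k y)
    (f : W → ℝ≥0∞) (hf : IsStateAt f y) : f x < f y := by
  have hle := hf.mono _ _ h
  rw [f_rep hf, f_rep hf, hf.normalized, mul_one] at hle
  push_cast at hle
  rw [hf.normalized]
  by_contra hge
  push_neg at hge
  have h2 : ((k : ℝ≥0∞) + 1 + 1) * 1 ≤ (k : ℝ≥0∞) + 1 :=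
    le_trans (mul_le_mul_right hge _) hle
  rw [mul_one] at h2
  have h4 : ((k + 2 : ℕ) : ℝ≥0∞) ≤ ((k + 1 : ℕ) : ℝ≥0∞) := by
    push_cast
    calc (k : ℝ≥0∞) + 2 = (k : ℝ≥0∞) + 1 + 1 := by ring
      _ ≤ (k : ℝ≥0∞) + 1 := h2
  have h5 : k + 2 ≤ k + 1 := by exact_mod_cast h4
  omega

lemma three_to_one (hadd : ∀ x y z : W, x ≤ y → x + z ≤ y + z)
    (hpos : ∀ x z : W, x ≤ x + z) (x y : W)
    (h3 : (∃ n : ℕ, x ≤ rep n y) ∧ ∀ f : W → ℝ≥0∞, IsStateAt f y → f x < f y) :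
    ∃ k : ℕ, rep (k + 1) x ≤ rep k y := by
  by_contra h1
  push_neg at h1
  obtain ⟨⟨N, hx⟩, hstates⟩ := h3
  classical
  letI : AddCommMonoid (Option W) := oAddCommMonoid
  letI : PartialOrder (Option W) := oPartialOrder
  letI : IsOrderedAddMonoid (Option W) := oOrdered hadd hpos
  have hposM : ∀ a : Option W, 0 ≤ a := by
    intro a
    cases a <;> trivial
  have coe_smul : ∀ (n : ℕ) (a : W), (n + 1) • (some a : Option W) = some (rep n a) := by
    intro n a
    induction n with
    | zero => exact one_nsmul _
    | succ n ih =>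
      rw [succ_nsmul, ih]
      rfl
  have h1M : ∀ k : ℕ, ¬ ((k + 2) • (some x : Option W) ≤ (k + 1) • (some y : Option W)) := by
    intro k hk
    apply h1 k
    rw [show k + 2 = (k + 1) + 1 from rfl, coe_smul (k + 1) x, coe_smul k y] at hk
    exact hk
  have hxM : (some x : Option W) ≤ (N + 1) • (some y : Option W) := by
    rw [coe_smul]
    exact hx
  obtain ⟨g, gadd, gmono, gy, gx⟩ := exists_state_ge hposM (some x) (some y) h1M N hxM
  set f : W → ℝ≥0∞ := fun w => g (some w) with hf
  have hstate : IsStateAt f y := by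
    refine ⟨?_, ?_, ?_⟩
    · intro a b
      have : (some (a + b) : Option W) = some a + some b := rfl
      simp only [hf]
      rw [this]
      exact gadd _ _
    · intro a b h
      exact gmono _ _ h
    · exact gy
  have hlt := hstates f hstate
  have hge : f y ≤ f x := by
    have : f y = 1 := gy
    rw [this]
    exact gx
  exact absurd hlt (not_lt.mpr hge)


/-- Proposition 2.1: for a positive ordered abelian semigroup `W` and `x, y ∈ W`,
the following are equivalent:
(i) `(k+1)x ≤ ky` for some positive integer `k`;
(ii) there is a positive integer `k₀` such that `(k+1)x ≤ ky` for every positive `k ≥ k₀`;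
(iii) `x ∝ y` (i.e. `x ≤ ny` for some positive integer `n`) and `f x < f y` for every
state `f` on `W` normalized at `y`.
(A positive integer `k` is encoded as `k + 1` with `k : ℕ`, and `(k+1)·x` is `rep k x`.) -/
theorem stably_dominated_tfae
    (hadd : ∀ x y z : W, x ≤ y → x + z ≤ y + z)
    (hpos : ∀ x z : W, x ≤ x + z) (x y : W) :
    List.TFAE
      [∃ k : ℕ, rep (k + 1) x ≤ rep k y,
       ∃ k₀ : ℕ, ∀ k : ℕ, k₀ ≤ k → rep (k + 1) x ≤ rep k y,
       (∃ n : ℕ, x ≤ rep n y) ∧ ∀ f : W → ℝ≥0∞, IsStateAt f y → f x < f y] := by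
  tfae_have 1 → 2 := by
    rintro ⟨k, hk⟩
    exact ⟨(k + 2) * (k + 2), fun m hm => one_two hadd hpos x y k hk m hm⟩
  tfae_have 2 → 1 := by
    rintro ⟨k₀, h⟩
    exact ⟨k₀, h k₀ le_rfl⟩
  tfae_have 1 → 3 := by
    rintro ⟨k, hk⟩
    refine ⟨⟨k, le_trans (rep_mono_idx hpos (Nat.zero_le (k + 1)) x) hk⟩, ?_⟩
    intro f hf
    exact states_lt x y k hk f hf
  tfae_have 3 → 1 := three_to_one hadd hpos x y
  tfae_finish


end WSide
end Stmt0
end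

section
/- Fix a positive integer n and let W_n be the additive submonoid of the natural numbers generated by n+1 and n+2, equipped with the algebraic order: x ≤ y iff y = x + z for some z ∈ W_n. Then W_n has the n-comparison property: if x, y_0, y_1, …, y_n ∈ W_n satisfy x <_s y_j for every j = 0, …, n, then x ≤ y_0 + y_1 + ⋯ + y_n in W_n. -/
namespace Stmt6

/-- `Wn n` is the additive submonoid of `ℕ` generated by `n+1` and `n+2`. -/
def Wn (n : ℕ) : AddSubmonoid ℕ := AddSubmonoid.closure {n + 1, n + 2}

/-- The algebraic order on `Wn n`: `x ≤ y` iff `y = x + z` for some `z ∈ Wn n`. -/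
def ordW (n x y : ℕ) : Prop := ∃ z ∈ Wn n, y = x + z

lemma mem_Wn_of_big (n m : ℕ) (h : n * (n + 1) ≤ m) : m ∈ Wn n := by
  have hpos : 0 < n + 1 := Nat.succ_pos n
  have hd := Nat.div_add_mod m (n + 1)
  set s := m / (n + 1) with hs
  set r := m % (n + 1) with hr
  have hrlt : r < n + 1 := Nat.mod_lt _ hpos
  have hns : n ≤ s := (Nat.le_div_iff_mul_le hpos).mpr (by nlinarith)
  obtain ⟨a, ha⟩ : ∃ a, s = a + r := ⟨s - r, by omega⟩
  have hm : m = a * (n + 1) + r * (n + 2) := by rw [← hd, ha]; ring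
  rw [hm]
  have h1 : (n + 1) ∈ Wn n := AddSubmonoid.subset_closure (by simp)
  have h2 : (n + 2) ∈ Wn n := AddSubmonoid.subset_closure (by simp)
  exact AddSubmonoid.add_mem _
    (by simpa [smul_eq_mul] using AddSubmonoid.nsmul_mem _ h1 a)
    (by simpa [smul_eq_mul] using AddSubmonoid.nsmul_mem _ h2 r)

lemma Wn_zero_or_big (n x : ℕ) (hx : x ∈ Wn n) : x = 0 ∨ n + 1 ≤ x := by
  induction hx using AddSubmonoid.closure_induction with
  | mem a ha => simp only [Set.mem_insert_iff, Set.mem_singleton_iff] at ha; omega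
  | zero => left; rfl
  | add a b _ _ ha hb => omega

/-- Example 2.22 (first part): for a positive integer `n`, the semigroup `W_n` has the
`n`-comparison property: if `x, y_0, …, y_n ∈ W_n` satisfy `x <_s y_j`
(i.e. `(k+1)·x ≤ k·y_j` in the algebraic order of `W_n` for some positive integer `k`,
encoded as `k+1` below) for every `j`, then `x ≤ y_0 + y_1 + ⋯ + y_n` in `W_n`. -/
theorem wn_n_comparison (n : ℕ) (hn : 0 < n)
    (x : ℕ) (hx : x ∈ Wn n)
    (y : Fin (n + 1) → ℕ) (hy : ∀ j, y j ∈ Wn n)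
    (hstd : ∀ j, ∃ k : ℕ, ordW n ((k + 2) * x) ((k + 1) * y j)) :
    ordW n x (∑ j, y j) := by
  rcases Wn_zero_or_big n x hx with h0 | hge
  · subst h0
    exact ⟨∑ j, y j, AddSubmonoid.sum_mem _ (fun j _ => hy j), by omega⟩
  · have hyj : ∀ j, x + 1 ≤ y j := by
      intro j
      obtain ⟨k, z, hz, he⟩ := hstd j
      nlinarith [he]
    have hsum : (n + 1) * (x + 1) ≤ ∑ j, y j := by
      calc (n + 1) * (x + 1) = ∑ _j : Fin (n + 1), (x + 1) := by
            simp [Finset.sum_const, Finset.card_univ, mul_comm]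
        _ ≤ ∑ j, y j := Finset.sum_le_sum (fun j _ => hyj j)
    have hbig : x + n * (n + 1) ≤ ∑ j, y j := by nlinarith
    refine ⟨∑ j, y j - x, mem_Wn_of_big n _ (by omega), by omega⟩

end Stmt6
end

section
/- Fix a positive integer n and let W_n be the additive submonoid of the natural numbers generated by n+1 and n+2, equipped with the algebraic order: x ≤ y iff y = x + z for some z ∈ W_n. Then W_n does not have the (n−1)-comparison property: the elements x = n+1 and y_0 = y_1 = ⋯ = y_{n−1} = n+2 satisfy x <_s y_j for all j, but x ≤ y_0 + y_1 + ⋯ + y_{n−1} fails in W_n (indeed n(n+2) − (n+1) = n² + n − 1 does not lie in W_n). -/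
namespace Stmt7

/-- `Wn n` is the additive submonoid of `ℕ` generated by `n+1` and `n+2`. -/
def Wn (n : ℕ) : AddSubmonoid ℕ := AddSubmonoid.closure {n + 1, n + 2}

/-- The algebraic order on `Wn n`: `x ≤ y` iff `y = x + z` for some `z ∈ Wn n`. -/
def ordW (n x y : ℕ) : Prop := ∃ z ∈ Wn n, y = x + z

lemma not_mem_aux (n : ℕ) (hn : 0 < n) : n ^ 2 + n - 1 ∉ Wn n := by
  intro h
  rw [Wn, AddSubmonoid.mem_closure_pair] at h
  obtain ⟨a, b, hab⟩ := h
  simp only [smul_eq_mul] at hab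
  have key : a * (n + 1) + b * (n + 2) + 1 = n ^ 2 + n := by
    rw [hab]
    have : 1 ≤ n ^ 2 + n := by nlinarith
    omega
  rcases le_or_gt n (a + b) with h | h
  · nlinarith
  · have h' : a + b + 1 ≤ n := h
    nlinarith

/-- Example 2.22 (second part): for a positive integer `n`, the semigroup `W_n` fails the
`(n-1)`-comparison property: the elements `x = n+1` and `y_0 = ⋯ = y_{n-1} = n+2` satisfy
`x <_s y_j` (i.e. `(k+1)·x ≤ k·y_j` for some positive integer `k`, encoded `k+1`), but
`x ≤ y_0 + ⋯ + y_{n-1} = n(n+2)` fails in `W_n`; indeed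
`n(n+2) - (n+1) = n² + n - 1` does not lie in `W_n`. -/
theorem wn_not_sub_one_comparison (n : ℕ) (hn : 0 < n) :
    (∃ k : ℕ, ordW n ((k + 2) * (n + 1)) ((k + 1) * (n + 2))) ∧
      ¬ ordW n (n + 1) (n * (n + 2)) ∧
      n ^ 2 + n - 1 ∉ Wn n := by
  refine ⟨⟨n, 0, (Wn n).zero_mem, by ring⟩, ?_, not_mem_aux n hn⟩
  rintro ⟨z, hz, hzeq⟩
  have h2 : z + 1 = n ^ 2 + n := by nlinarith
  have : z = n ^ 2 + n - 1 := Nat.eq_sub_of_add_eq h2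
  exact not_mem_aux n hn (this ▸ hz)

end Stmt7
end

section
/- Let W_ω = ⊕_{n≥1} W_n be the direct sum (finitely supported sequences) of the semigroups W_n, with coordinatewise addition and coordinatewise order. If x, y⁰, y¹, y², … are elements of W_ω such that x <_s y^j for all j ≥ 0, then there exists k such that x ≤ y⁰ + y¹ + ⋯ + y^k in W_ω. -/
namespace Stmt8

/-- `Wn n` is the additive submonoid of `ℕ` generated by `n+1` and `n+2`. -/
def Wn (n : ℕ) : AddSubmonoid ℕ := AddSubmonoid.closure {n + 1, n + 2}

/-- The algebraic order on `Wn n`: `x ≤ y` iff `y = x + z` for some `z ∈ Wn n`. -/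
def ordW (n x y : ℕ) : Prop := ∃ z ∈ Wn n, y = x + z

/-- Membership in `W_ω = ⊕_{n≥1} W_n`: a finitely supported sequence whose `i`-th entry
(`i = 0, 1, 2, …`, representing `n = i+1`) lies in `W_{i+1}`. -/
def MemWomega (x : ℕ → ℕ) : Prop :=
  (∀ i, x i ∈ Wn (i + 1)) ∧ Set.Finite {i | x i ≠ 0}

/-- The coordinatewise order on `W_ω`, each coordinate carrying the algebraic order of
`W_{i+1}`. -/
def leWomega (x y : ℕ → ℕ) : Prop := ∀ i, ordW (i + 1) (x i) (y i)

lemma mem_Wn_of_le {n m : ℕ} (h : n * (n + 1) ≤ m) : m ∈ Wn n := by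
  have h1 : (n + 1) ∈ Wn n := AddSubmonoid.subset_closure (Or.inl rfl)
  have h2 : (n + 2) ∈ Wn n := AddSubmonoid.subset_closure (Or.inr rfl)
  have hr : m % (n + 1) < n + 1 := Nat.mod_lt _ (by omega)
  have hq : n ≤ m / (n + 1) := by
    have := Nat.div_le_div_right (c := n + 1) h
    simpa [Nat.mul_div_cancel] using this
  obtain ⟨d, hd⟩ : ∃ d, m / (n + 1) = d + m % (n + 1) :=
    ⟨m / (n + 1) - m % (n + 1), by omega⟩
  have hm : m = d * (n + 1) + (m % (n + 1)) * (n + 2) := by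
    have h0 := Nat.div_add_mod m (n + 1)
    rw [hd] at h0
    nlinarith [h0]
  rw [hm]
  exact add_mem (by simpa [nsmul_eq_mul] using (Wn n).nsmul_mem h1 d)
    (by simpa [nsmul_eq_mul] using (Wn n).nsmul_mem h2 (m % (n + 1)))

lemma Wn_lb {n x : ℕ} (hx : x ∈ Wn n) : x = 0 ∨ n + 1 ≤ x := by
  induction hx using AddSubmonoid.closure_induction with
  | mem a ha =>
    simp only [Set.mem_insert_iff, Set.mem_singleton_iff] at ha
    omega
  | zero => exact Or.inl rfl
  | add a b _ _ ha hb => omega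

/-- Example 2.22 (third part): `W_ω = ⊕_{n≥1} W_n` has the ω-comparison property: if
`x, y⁰, y¹, … ∈ W_ω` satisfy `x <_s y^j` for all `j` (i.e. `(k+1)·x ≤ k·y^j` for some
positive integer `k`, encoded `k+1`), then `x ≤ y⁰ + y¹ + ⋯ + y^K` for some `K`. -/
theorem womega_omega_comparison
    (x : ℕ → ℕ) (hx : MemWomega x)
    (y : ℕ → ℕ → ℕ) (hy : ∀ j, MemWomega (y j))
    (hstd : ∀ j, ∃ k : ℕ,
      leWomega (fun i => (k + 2) * x i) (fun i => (k + 1) * y j i)) :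
    ∃ K : ℕ, leWomega x (fun i => ∑ j ∈ Finset.range (K + 1), y j i) := by
  classical
  set S := hx.2.toFinset with hS
  set K := S.sup (fun i => x i + (i + 1) * (i + 2)) with hKdef
  refine ⟨K, fun i => ?_⟩
  simp only
  by_cases h0 : x i = 0
  · exact ⟨∑ j ∈ Finset.range (K + 1), y j i,
      AddSubmonoid.sum_mem _ (fun j _ => (hy j).1 i), by simp [h0]⟩
  · have hiS : i ∈ S := by
      rw [hS, Set.Finite.mem_toFinset]; exact h0
    have hK : x i + (i + 1) * (i + 2) ≤ K :=
      Finset.le_sup (f := fun i => x i + (i + 1) * (i + 2)) hiS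
    have hyi : ∀ j, i + 2 ≤ y j i := by
      intro j
      obtain ⟨k, hk⟩ := hstd j
      obtain ⟨z, hz, he⟩ := hk i
      simp only at he
      have hy0 : y j i ≠ 0 := by
        intro hzero
        rw [hzero, mul_zero] at he
        have : (k + 2) * x i = 0 := by omega
        rcases Nat.mul_eq_zero.mp this with h | h <;> omega
      rcases Wn_lb ((hy j).1 i) with h | h
      · exact absurd h hy0
      · omega
    have hsum : (K + 1) * (i + 2) ≤ ∑ j ∈ Finset.range (K + 1), y j i := by
      calc (K + 1) * (i + 2) = ∑ _j ∈ Finset.range (K + 1), (i + 2) := by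
            simp [Finset.sum_const, mul_comm]
        _ ≤ _ := Finset.sum_le_sum (fun j _ => hyi j)
    have hK1 : K + 1 ≤ (K + 1) * (i + 2) := Nat.le_mul_of_pos_right _ (by omega)
    have heq : (i + 1) * ((i + 1) + 1) = (i + 1) * (i + 2) := by ring
    refine ⟨∑ j ∈ Finset.range (K + 1), y j i - x i, ?_, by omega⟩
    have : (i + 1) * ((i + 1) + 1) ≤ ∑ j ∈ Finset.range (K + 1), y j i - x i := by omega
    exact mem_Wn_of_le this

end Stmt8
end

section
/- Let W_ω = ⊕_{n≥1} W_n be the direct sum (finitely supported sequences) of the semigroups W_n, with coordinatewise addition and coordinatewise order. Then W_ω does not have the n-comparison property for any positive integer n: for every n there exist elements x, y_0, y_1, …, y_n ∈ W_ω with x <_s y_j for all j = 0, …, n, but x ≤ y_0 + y_1 + ⋯ + y_n fails. -/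
namespace Stmt9

/-- `Wn n` is the additive submonoid of `ℕ` generated by `n+1` and `n+2`. -/
def Wn (n : ℕ) : AddSubmonoid ℕ := AddSubmonoid.closure {n + 1, n + 2}

/-- The algebraic order on `Wn n`: `x ≤ y` iff `y = x + z` for some `z ∈ Wn n`. -/
def ordW (n x y : ℕ) : Prop := ∃ z ∈ Wn n, y = x + z

/-- Membership in `W_ω = ⊕_{n≥1} W_n`: a finitely supported sequence whose `i`-th entry
(`i = 0, 1, 2, …`, representing `n = i+1`) lies in `W_{i+1}`. -/
def MemWomega (x : ℕ → ℕ) : Prop :=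
  (∀ i, x i ∈ Wn (i + 1)) ∧ Set.Finite {i | x i ≠ 0}

/-- The coordinatewise order on `W_ω`, each coordinate carrying the algebraic order of
`W_{i+1}`. -/
def leWomega (x y : ℕ → ℕ) : Prop := ∀ i, ordW (i + 1) (x i) (y i)

/-- Example 2.22 (fourth part): `W_ω = ⊕_{n≥1} W_n` fails the `n`-comparison property
for every positive integer `n`: there are `x, y_0, …, y_n ∈ W_ω` with `x <_s y_j` for
all `j` (i.e. `(k+1)·x ≤ k·y_j` for some positive integer `k`, encoded `k+1`), but
`x ≤ y_0 + y_1 + ⋯ + y_n` fails. -/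
theorem womega_not_n_comparison (n : ℕ) (hn : 0 < n) :
    ∃ (x : ℕ → ℕ) (y : Fin (n + 1) → ℕ → ℕ),
      MemWomega x ∧ (∀ j, MemWomega (y j)) ∧
      (∀ j, ∃ k : ℕ,
        leWomega (fun i => (k + 2) * x i) (fun i => (k + 1) * y j i)) ∧
      ¬ leWomega x (fun i => ∑ j, y j i) := by
  refine ⟨fun i => if i = n then n + 2 else 0,
    fun _ i => if i = n then n + 3 else 0, ⟨?_, ?_⟩, fun j => ⟨?_, ?_⟩, fun j => ⟨n + 1, ?_⟩, ?_⟩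
  · intro i
    by_cases h : i = n
    · subst h
      simp only [if_pos rfl]
      exact AddSubmonoid.subset_closure (by left; rfl)
    · simp only [if_neg h]; exact zero_mem _
  · exact (Set.finite_singleton n).subset (fun i hi => by
      by_contra h; exact hi (if_neg h))
  · intro i
    by_cases h : i = n
    · subst h
      simp only [if_pos rfl]
      exact AddSubmonoid.subset_closure (by right; rfl)
    · simp only [if_neg h]; exact zero_mem _
  · exact (Set.finite_singleton n).subset (fun i hi => by
      by_contra h; exact hi (if_neg h))
  · intro i
    by_cases h : i = n
    · subst h
      refine ⟨0, zero_mem _, ?_⟩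
      simp only [if_pos rfl, if_true]
      ring
    · exact ⟨0, zero_mem _, by simp [if_neg h]⟩
  · intro hle
    obtain ⟨z, hz, heq⟩ := hle n
    simp only [if_pos rfl, if_true, Finset.sum_const, Finset.card_univ, Fintype.card_fin,
      smul_eq_mul] at heq
    have hzval : z = n ^ 2 + 3 * n + 1 := by nlinarith [heq]
    rw [hzval] at hz
    rw [Wn, AddSubmonoid.mem_closure_pair] at hz
    obtain ⟨a, b, hab⟩ := hz
    simp only [smul_eq_mul] at hab
    rcases le_or_gt (a + b) n with hs | hs
    · nlinarith
    · nlinarith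

end Stmt9
end

section
/- Let A be a C*-algebra and let (e_k) be an increasing approximate unit for A consisting of positive contractions. Then for every positive element a ∈ A and every ε > 0, one has (a−ε)₊ ≾ e_k for all sufficiently large k. -/
open Filter Topology

namespace Stmt12

variable {A : Type*} [NonUnitalCStarAlgebra A] [PartialOrder A] [StarOrderedRing A]

/-- `(a - ε)₊`, via the continuous functional calculus with `t ↦ max (t - ε) 0`. -/
noncomputable def cutoff (a : A) (ε : ℝ) : A := cfcₙ (fun t : ℝ => max (t - ε) 0) a

/-- Cuntz subequivalence `a ≾ b` inside `A`: there is a sequence `(x m)` with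
`‖x m⋆ * b * x m - a‖ → 0`. -/
def CuntzLe (a b : A) : Prop :=
  ∃ x : ℕ → A, Tendsto (fun m => ‖star (x m) * b * x m - a‖) atTop (nhds 0)

/-- The elementary real inequality driving the estimates. -/
lemma real_bound {η t : ℝ} (hη : 0 < η) (ht : 0 ≤ t) :
    t * (1 - (t * (t + η)⁻¹) ^ 2) ≤ 2 * η := by
  have htη : 0 < t + η := by positivity
  have h1 : (t * (t + η)⁻¹) ^ 2 = t ^ 2 / (t + η) ^ 2 := by
    rw [mul_pow, inv_pow, div_eq_mul_inv]
  have h2 : t * (1 - t ^ 2 / (t + η) ^ 2) = t * ((t + η) ^ 2 - t ^ 2) / (t + η) ^ 2 := by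
    field_simp
  rw [h1, h2, div_le_iff₀ (by positivity)]
  nlinarith [sq_nonneg t, sq_nonneg η, mul_nonneg ht hη.le, mul_nonneg (mul_nonneg ht hη.le) hη.le,
    mul_nonneg (mul_nonneg hη.le hη.le) hη.le]

set_option maxHeartbeats 1000000 in
/-- If `0 ≤ d ≤ c` in a C⋆-algebra, then `d` is Cuntz subequivalent to `c`. -/
theorem cuntzLe_of_le {d c : A} (hd : 0 ≤ d) (hc : 0 ≤ c) (h : d ≤ c) : CuntzLe d c := by
  set s : A := CFC.sqrt d with hs
  have hs0 : 0 ≤ s := CFC.sqrt_nonneg d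
  have hss : s * s = d := CFC.sqrt_mul_sqrt_self d hd
  refine ⟨fun n => cfcₙ (fun t : ℝ => Real.sqrt t * (t + ((n : ℝ) + 1)⁻¹)⁻¹) c * s, ?_⟩
  have key : ∀ n : ℕ,
      ‖star (cfcₙ (fun t : ℝ => Real.sqrt t * (t + ((n : ℝ) + 1)⁻¹)⁻¹) c * s) * c *
        (cfcₙ (fun t : ℝ => Real.sqrt t * (t + ((n : ℝ) + 1)⁻¹)⁻¹) c * s) - d‖
        ≤ 2 * ((n : ℝ) + 1)⁻¹ := by
    intro n
    set η : ℝ := ((n : ℝ) + 1)⁻¹ with hηdef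
    have hηpos : 0 < η := by positivity
    set g : ℝ → ℝ := fun t => Real.sqrt t * (t + η)⁻¹ with hgdef
    have hg0 : g 0 = 0 := by simp [hgdef]
    set C : Unitization ℂ A := (c : Unitization ℂ A) with hCdef
    set S : Unitization ℂ A := (s : Unitization ℂ A) with hSdef
    set D : Unitization ℂ A := (d : Unitization ℂ A) with hDdef
    have hC : 0 ≤ C := Unitization.inr_nonneg_iff.mpr hc
    have hD : 0 ≤ D := Unitization.inr_nonneg_iff.mpr hd
    have hCsa : IsSelfAdjoint C := .of_nonneg hC
    have hSsa : IsSelfAdjoint S := .of_nonneg (Unitization.inr_nonneg_iff.mpr hs0)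
    have hDC : D ≤ C := (Unitization.inr_le_iff d c (.of_nonneg hd) (.of_nonneg hc)).mpr h
    have hSS : S * S = D := by rw [hSdef, hDdef, ← Unitization.inr_mul, hss]
    have hspec : ∀ t ∈ spectrum ℝ C, (0 : ℝ) ≤ t := fun t ht =>
      spectrum_nonneg_of_nonneg hC ht
    -- continuity facts
    have hgIci : ContinuousOn g (Set.Ici (0 : ℝ)) := by
      apply ContinuousOn.mul Real.continuous_sqrt.continuousOn
      apply ContinuousOn.inv₀ (by fun_prop)
      intro t ht
      have h0 : (0 : ℝ) ≤ t := ht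
      positivity
    have hgc : ContinuousOn g (spectrum ℝ C) := hgIci.mono (fun t ht => hspec t ht)
    set φ : ℝ → ℝ := fun t => g t * t * g t with hφdef
    have hφc : ContinuousOn φ (spectrum ℝ C) := (hgc.mul continuousOn_id).mul hgc
    set ψ : ℝ → ℝ := fun t => 1 - φ t with hψdef
    have hψc : ContinuousOn ψ (spectrum ℝ C) := continuousOn_const.sub hφc
    set r : ℝ → ℝ := fun t => Real.sqrt (ψ t) with hrdef
    have hrc : ContinuousOn r (spectrum ℝ C) := Real.continuous_sqrt.comp_continuousOn hψc
    -- pointwise facts on the spectrum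
    have hφ_eq : ∀ t : ℝ, 0 ≤ t → φ t = (t * (t + η)⁻¹) ^ 2 := by
      intro t ht
      have hsq : Real.sqrt t * Real.sqrt t = t := Real.mul_self_sqrt ht
      show Real.sqrt t * (t + η)⁻¹ * t * (Real.sqrt t * (t + η)⁻¹) = (t * (t + η)⁻¹) ^ 2
      calc Real.sqrt t * (t + η)⁻¹ * t * (Real.sqrt t * (t + η)⁻¹)
          = (Real.sqrt t * Real.sqrt t) * t * ((t + η)⁻¹ * (t + η)⁻¹) := by ring
        _ = (t * (t + η)⁻¹) ^ 2 := by rw [hsq]; ring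
    have hψ_nonneg : ∀ t : ℝ, 0 ≤ t → 0 ≤ ψ t := by
      intro t ht
      have htη : 0 < t + η := by positivity
      have hu1 : t * (t + η)⁻¹ ≤ 1 := by
        rw [← div_eq_mul_inv, div_le_one htη]; linarith
      have hu0 : 0 ≤ t * (t + η)⁻¹ := by positivity
      simp only [hψdef, hφ_eq t ht, sub_nonneg]
      nlinarith
    -- the element in the unitization
    rw [← Unitization.norm_inr (𝕜 := ℂ)]
    push_cast [Unitization.inr_sub, Unitization.inr_mul, Unitization.inr_star]
    rw [Unitization.real_cfcₙ_eq_cfc_inr c g hg0]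
    set G : Unitization ℂ A := cfc g C with hGdef
    have hGsa : IsSelfAdjoint G := cfc_predicate g C
    have hGCG : G * C * G = cfc φ C := by
      conv_lhs => rw [← cfc_id ℝ C hCsa]
      rw [← cfc_mul g id C hgc (by fun_prop), ← cfc_mul (fun x => g x * id x) g C (hgc.mul continuousOn_id) hgc]
      rfl
    have hψ_cfc : cfc ψ C = 1 - cfc φ C := by
      rw [hψdef, cfc_sub (fun _ => (1 : ℝ)) φ C (by fun_prop) hφc, cfc_const_one ℝ C hCsa]
    set R' : Unitization ℂ A := cfc r C with hRdef'
    have hRsa : IsSelfAdjoint R' := cfc_predicate r C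
    have hRR : R' * R' = cfc ψ C := by
      rw [hRdef', ← cfc_mul r r C hrc hrc]
      exact cfc_congr fun t ht => Real.mul_self_sqrt (hψ_nonneg t (hspec t ht))
    -- rewrite the difference
    have main_eq : star (G * S) * C * (G * S) - D = -(S * cfc ψ C * S) := by
      have h1 : star (G * S) * C * (G * S) = S * cfc φ C * S := by
        rw [star_mul, hGsa.star_eq, hSsa.star_eq, ← hGCG]
        simp only [mul_assoc]
      rw [h1, hψ_cfc, mul_sub, mul_one, sub_mul, hSS, neg_sub]
    rw [main_eq, norm_neg]
    -- estimate ‖S * cfc ψ C * S‖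
    have hconj : S * cfc ψ C * S = star (R' * S) * (R' * S) := by
      rw [star_mul, hRsa.star_eq, hSsa.star_eq, ← hRR]
      simp only [mul_assoc]
    have hnorm_eq : ‖S * cfc ψ C * S‖ = ‖R' * D * R'‖ := by
      rw [hconj, CStarRing.norm_star_mul_self]
      have h2 : (R' * S) * star (R' * S) = R' * D * R' := by
        rw [star_mul, hRsa.star_eq, hSsa.star_eq, ← hSS]
        simp only [mul_assoc]
      rw [← CStarRing.norm_self_mul_star (x := R' * S), h2]
    rw [hnorm_eq]
    have hRDR_nonneg : 0 ≤ R' * D * R' := by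
      have := star_left_conjugate_nonneg hD R'
      rwa [hRsa.star_eq] at this
    have hRDR_le : R' * D * R' ≤ R' * C * R' := by
      have := star_left_conjugate_le_conjugate hDC R'
      rwa [hRsa.star_eq] at this
    have hRCR : R' * C * R' = cfc (fun t => r t * t * r t) C := by
      conv_lhs => rw [← cfc_id ℝ C hCsa]
      rw [hRdef', ← cfc_mul r id C hrc (by fun_prop),
        ← cfc_mul (fun x => r x * id x) r C (hrc.mul continuousOn_id) hrc]
      rfl
    refine (CStarAlgebra.norm_le_norm_of_nonneg_of_le hRDR_nonneg hRDR_le).trans ?_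
    rw [hRCR]
    refine norm_cfc_le (by positivity) fun t ht => ?_
    have ht0 : (0 : ℝ) ≤ t := hspec t ht
    have hψt : 0 ≤ ψ t := hψ_nonneg t ht0
    have hval : r t * t * r t = t * ψ t := by
      have : r t * r t = ψ t := Real.mul_self_sqrt hψt
      nlinarith [this]
    rw [hval, Real.norm_of_nonneg (mul_nonneg ht0 hψt)]
    have := real_bound hηpos ht0
    rw [hψdef]
    simp only [hφ_eq t ht0]
    exact this
  refine squeeze_zero (fun n => norm_nonneg _) key ?_
  have h2 : Tendsto (fun n : ℕ => 2 * ((n : ℝ) + 1)⁻¹) atTop (nhds (2 * 0)) := by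
    have : Tendsto (fun n : ℕ => 1 / ((n : ℝ) + 1)) atTop (nhds 0) := tendsto_one_div_add_atTop_nhds_zero_nat
    simpa [one_div] using this.const_mul 2
  simpa using h2

/-- Lemma 5.1(i): if `(e k)` is an increasing approximate unit of positive contractions
for `A`, then for every positive `a ∈ A` and every `ε > 0` one has `(a - ε)₊ ≾ e k` for
all sufficiently large `k`. -/
theorem cutoff_cuntzLe_approximateUnit
    {ι : Type*} [Preorder ι] [IsDirected ι (· ≤ ·)] [Nonempty ι]
    (e : ι → A) (he_mono : Monotone e)
    (he_pos : ∀ k, 0 ≤ e k) (he_contr : ∀ k, ‖e k‖ ≤ 1)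
    (he_unit : ∀ a : A, Tendsto (fun k => e k * a) atTop (nhds a))
    (a : A) (ha : 0 ≤ a) (ε : ℝ) (hε : 0 < ε) :
    ∀ᶠ k in atTop, CuntzLe (cutoff a ε) (e k) := by
  classical
  set s₀ : A := CFC.sqrt a with hs₀def
  have hs₀nn : 0 ≤ s₀ := CFC.sqrt_nonneg a
  have hs₀sa : IsSelfAdjoint s₀ := .of_nonneg hs₀nn
  have hss : s₀ * s₀ = a := CFC.sqrt_mul_sqrt_self a ha
  have hrpos : 0 < ε / 2 / (‖s₀‖ + 1) := by positivity
  have hev : ∀ᶠ k in atTop, ‖e k * s₀ - s₀‖ < ε / 2 / (‖s₀‖ + 1) := by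
    have := Metric.tendsto_nhds.mp (he_unit s₀) _ hrpos
    simpa [dist_eq_norm] using this
  filter_upwards [hev] with k hk
  set E : A := e k with hEdef
  have hEnn : 0 ≤ E := he_pos k
  have hEsa : IsSelfAdjoint E := .of_nonneg hEnn
  set b : A := s₀ * E * s₀ with hbdef
  have hbsa : IsSelfAdjoint b := by
    rw [hbdef, IsSelfAdjoint, star_mul, star_mul, hs₀sa.star_eq, hEsa.star_eq, ← mul_assoc]
  have hδ : ‖a - b‖ ≤ ε / 2 := by
    have hab : a - b = s₀ * (s₀ - E * s₀) := by
      rw [mul_sub, hss, ← mul_assoc]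
    rw [hab]
    calc ‖s₀ * (s₀ - E * s₀)‖ ≤ ‖s₀‖ * ‖s₀ - E * s₀‖ := norm_mul_le _ _
      _ ≤ (‖s₀‖ + 1) * (ε / 2 / (‖s₀‖ + 1)) := by
          rw [norm_sub_rev]
          apply mul_le_mul (by linarith) hk.le (norm_nonneg _) (by positivity)
      _ = ε / 2 := by field_simp
  -- the cut-down function
  set H : ℝ → ℝ := fun t => Real.sqrt (max (t - ε) 0 / max (t - ε / 2) (ε / 2)) with hHdef
  have hH0 : H 0 = 0 := by
    have : max (0 - ε) 0 = 0 := max_eq_right (by linarith)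
    simp [hHdef, this, hε.le]
  have hHcont : Continuous H := by
    apply Real.continuous_sqrt.comp
    apply Continuous.div (by fun_prop) (by fun_prop)
    intro t
    have : 0 < max (t - ε / 2) (ε / 2) := lt_of_lt_of_le (by linarith) (le_max_right _ _)
    exact ne_of_gt this
  have hHkey : ∀ t : ℝ, H t * (t - ε / 2) * H t = max (t - ε) 0 := by
    intro t
    rcases le_or_gt t ε with h1 | h1
    · have hnum : max (t - ε) 0 = 0 := max_eq_right (by linarith)
      simp [hHdef, hnum]
    · have hden : max (t - ε / 2) (ε / 2) = t - ε / 2 := max_eq_left (by linarith)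
      have hnum : max (t - ε) 0 = t - ε := max_eq_left (by linarith)
      have hdpos : (0 : ℝ) < t - ε / 2 := by linarith
      have hfrac : 0 ≤ (t - ε) / (t - ε / 2) := div_nonneg (by linarith) hdpos.le
      have hsq : H t * H t = (t - ε) / (t - ε / 2) := by
        rw [hHdef]
        simp only [hden, hnum]
        exact Real.mul_self_sqrt hfrac
      calc H t * (t - ε / 2) * H t = (H t * H t) * (t - ε / 2) := by ring
        _ = (t - ε) / (t - ε / 2) * (t - ε / 2) := by rw [hsq]
        _ = t - ε := div_mul_cancel₀ _ (ne_of_gt hdpos)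
        _ = max (t - ε) 0 := hnum.symm
  set h : A := cfcₙ H a with hhdef
  have hhsa : IsSelfAdjoint h := cfcₙ_predicate H a
  set σ : A := h * b * h with hσdef
  have hσ_eq : star (s₀ * h) * E * (s₀ * h) = σ := by
    rw [star_mul, hhsa.star_eq, hs₀sa.star_eq, hσdef, hbdef]
    simp only [mul_assoc]
  have hσnn : 0 ≤ σ := hσ_eq ▸ star_left_conjugate_nonneg hEnn (s₀ * h)
  have hcut_nn : 0 ≤ cutoff a ε := cfcₙ_nonneg (fun x _ => le_max_right _ _)
  -- the key inequality (a - ε)₊ ≤ σ, proved in the unitization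
  have hle : cutoff a ε ≤ σ := by
    rw [← Unitization.inr_le_iff _ _ (.of_nonneg hcut_nn) (.of_nonneg hσnn)]
    set B := Unitization ℂ A
    set aB : B := (a : B) with haBdef
    have haBnn : 0 ≤ aB := Unitization.inr_nonneg_iff.mpr ha
    have haBsa : IsSelfAdjoint aB := .of_nonneg haBnn
    set hB : B := cfc H aB with hBdef
    have hBsa : IsSelfAdjoint hB := cfc_predicate H aB
    have hcoe : ((h : A) : B) = hB := by
      rw [hhdef, hBdef, Unitization.real_cfcₙ_eq_cfc_inr a H hH0]
    have h1 : ((a - b : A) : B) ≤ algebraMap ℝ B ‖((a - b : A) : B)‖ :=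
      IsSelfAdjoint.le_algebraMap_norm_self
        (((IsSelfAdjoint.of_nonneg ha).sub hbsa).inr ℂ)
    have h2 : algebraMap ℝ B ‖((a - b : A) : B)‖ ≤ algebraMap ℝ B (ε / 2) := by
      rw [← cfc_const _ aB haBsa, ← cfc_const _ aB haBsa]
      refine cfc_mono fun x _ => ?_
      rw [Unitization.norm_inr]
      exact hδ
    have hab2 : aB - algebraMap ℝ B (ε / 2) ≤ ((b : A) : B) := by
      have h3 := h1.trans h2
      rw [Unitization.inr_sub] at h3
      exact sub_le_comm.mp h3
    have h4 : hB * (aB - algebraMap ℝ B (ε / 2)) * hB ≤ hB * ((b : A) : B) * hB :=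
      IsSelfAdjoint.conjugate_le_conjugate hab2 hBsa
    have h5 : hB * (aB - algebraMap ℝ B (ε / 2)) * hB = ((cutoff a ε : A) : B) := by
      have e1 : aB - algebraMap ℝ B (ε / 2) = cfc (fun t : ℝ => t - ε / 2) aB := by
        rw [cfc_sub (fun t : ℝ => t) (fun _ => ε / 2) aB (by fun_prop) (by fun_prop),
          cfc_id' ℝ aB haBsa, cfc_const _ aB haBsa]
      rw [e1, hBdef, ← cfc_mul H _ aB hHcont.continuousOn (by fun_prop),
        ← cfc_mul _ H aB (by fun_prop) hHcont.continuousOn]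
      rw [cfc_congr (fun t _ => hHkey t)]
      rw [cutoff, Unitization.real_cfcₙ_eq_cfc_inr a _ (by rw [zero_sub]; exact max_eq_right (by linarith))]
    have h6 : hB * ((b : A) : B) * hB = ((σ : A) : B) := by
      rw [hσdef]
      simp only [Unitization.inr_mul, hcoe]
    rw [← h5, ← h6]
    exact h4
  obtain ⟨x, hx⟩ := cuntzLe_of_le hcut_nn hσnn hle
  refine ⟨fun m => (s₀ * h) * x m, ?_⟩
  have heq : ∀ m, star ((s₀ * h) * x m) * E * ((s₀ * h) * x m)
      = star (x m) * σ * x m := by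
    intro m
    rw [star_mul, ← hσ_eq]
    simp only [mul_assoc]
  simpa only [heq] using hx

end Stmt12
end

section
/- Let A be a separable C*-algebra with property (S). Then A has no non-zero unital quotients: for every closed two-sided ideal I of A, if the quotient C*-algebra A/I has a unit, then A/I = 0. -/
open Filter Topology Matrix

namespace Stmt15

variable {A : Type*} [NonUnitalCStarAlgebra A] [PartialOrder A] [StarOrderedRing A]

/-- `a ⊗ 1ₙ`: the block-diagonal matrix `diag (a, …, a)` (`n` copies). -/
def tensorOne {B : Type*} [Zero B] (d : B) (n : ℕ) : Matrix (Fin n) (Fin n) B :=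
  Matrix.diagonal fun _ => d

/-- Cuntz subequivalence `a ≾ b` for `a ∈ M_p(A)`, `b ∈ M_q(A)`: there is a sequence
`(x k)` of `q × p` matrices with `(x k)ᴴ * b * (x k) → a`. -/
def CuntzLeMat {p q : ℕ} (a : Matrix (Fin p) (Fin p) A) (b : Matrix (Fin q) (Fin q) A) :
    Prop :=
  ∃ x : ℕ → Matrix (Fin q) (Fin p) A,
    Tendsto (fun k => (x k)ᴴ * b * (x k)) atTop (nhds a)

/-- `a ≺_s b`: `a ⊗ 1_{k+1} ≾ b ⊗ 1_k` for some positive integer `k`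
(encoded as `k + 1` with `k : ℕ`). -/
def PrecS (a b : A) : Prop :=
  ∃ k : ℕ, CuntzLeMat (tensorOne a (k + 2)) (tensorOne b (k + 1))

/-- `F(A)`: the set of positive `a ∈ A` with `e * a = a` for some positive `e ∈ A`. -/
def Fset (A : Type*) [NonUnitalCStarAlgebra A] [PartialOrder A] [StarOrderedRing A] :
    Set A :=
  {a : A | 0 ≤ a ∧ ∃ e : A, 0 ≤ e ∧ e * a = a}

/-- Property (S): for every `a ∈ F(A)` there is a positive `b ∈ A` with `a * b = 0` and
`a ≺_s b`. -/
def PropS (A : Type*) [NonUnitalCStarAlgebra A] [PartialOrder A] [StarOrderedRing A] :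
    Prop :=
  ∀ a ∈ Fset A, ∃ b : A, 0 ≤ b ∧ a * b = 0 ∧ PrecS a b


lemma star_mem_of_closed (I : TwoSidedIdeal A) (hI : IsClosed (I : Set A))
    {x : A} (hx : x ∈ I) : star x ∈ I := by
  set c : A := star x * x with hc_def
  have hc_mem : c ∈ I := I.mul_mem_left _ _ hx
  have hc_nonneg : (0:A) ≤ c := star_mul_self_nonneg x
  have hc_sa : IsSelfAdjoint c := .of_nonneg hc_nonneg
  have key : ∀ ε : ℝ, 0 < ε → ∃ y ∈ I, ‖star x - y * star x‖ ^ 2 ≤ ε := by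
    intro ε hε
    set g : ℝ → ℝ := fun t => t / (t + ε) with hg_def
    have hquas : ∀ t ∈ quasispectrum ℝ c, 0 ≤ t :=
      quasispectrum_nonneg_of_nonneg c hc_nonneg
    have hne : ∀ t ∈ quasispectrum ℝ c, t + ε ≠ 0 := fun t ht => by
      have := hquas t ht; positivity
    have hgc : ContinuousOn g (quasispectrum ℝ c) :=
      ContinuousOn.div continuousOn_id (by fun_prop) hne
    have hg0 : g 0 = 0 := by simp [hg_def]
    set G : A := cfcₙ g c with hG_def
    have hGsa : IsSelfAdjoint G := cfcₙ_predicate g c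
    -- the identity G = ε⁻¹ • (c - c * G)
    have htg : ContinuousOn (fun t : ℝ => t * g t) (quasispectrum ℝ c) :=
      continuousOn_id.mul hgc
    have htg0 : (fun t : ℝ => t * g t) 0 = 0 := by simp [hg_def]
    have hmul : cfcₙ (fun t : ℝ => t * g t) c = c * G := by
      rw [cfcₙ_mul (fun t : ℝ => t) g c continuousOn_id rfl hgc hg0,
        cfcₙ_id' ℝ c]
    have hGid : G = ε⁻¹ • (c - c * G) := by
      have h1 : cfcₙ (fun t : ℝ => ε⁻¹ • (t - t * g t)) c
          = ε⁻¹ • (c - c * G) := by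
        rw [cfcₙ_smul ε⁻¹ (fun t : ℝ => t - t * g t) c
            (continuousOn_id.sub htg) (by simp [hg_def]),
          cfcₙ_sub (fun t : ℝ => t) (fun t : ℝ => t * g t) c
            continuousOn_id rfl htg htg0,
          cfcₙ_id' ℝ c, hmul]
      rw [← h1]
      apply cfcₙ_congr
      intro t ht
      have h0 : 0 ≤ t := hquas t ht
      have hne' : t + ε ≠ 0 := by positivity
      have hε' : ε ≠ 0 := ne_of_gt hε
      simp only [hg_def, smul_eq_mul]
      field_simp
      ring
    have hG_mem : G ∈ I := by
      have hw : x - x * G ∈ I := I.sub_mem hx (I.mul_mem_right _ _ hx)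
      have h2 : c - c * G = star x * (x - x * G) := by
        rw [hc_def]; noncomm_ring
      rw [hGid, h2, ← smul_mul_assoc]
      exact I.mul_mem_left _ _ hw
    refine ⟨G, hG_mem, ?_⟩
    set z : A := star x - G * star x with hz_def
    have hzstar : star z = x - x * G := by
      rw [hz_def, star_sub, StarMul.star_mul, hGsa.star_eq, star_star]
    have hF : cfcₙ (fun t : ℝ => (t - t * g t) - (g t * t - g t * (t * g t))) c
        = c - c * G - (G * c - G * (c * G)) := by
      have hgt : ContinuousOn (fun t : ℝ => g t * t) (quasispectrum ℝ c) :=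
        hgc.mul continuousOn_id
      have hgtg : ContinuousOn (fun t : ℝ => g t * (t * g t)) (quasispectrum ℝ c) :=
        hgc.mul htg
      rw [cfcₙ_sub (fun t : ℝ => t - t * g t)
          (fun t : ℝ => g t * t - g t * (t * g t)) c
          (continuousOn_id.sub htg) (by simp [hg_def])
          (hgt.sub hgtg) (by simp [hg_def]),
        cfcₙ_sub (fun t : ℝ => t) (fun t : ℝ => t * g t) c
          continuousOn_id rfl htg htg0,
        cfcₙ_sub (fun t : ℝ => g t * t) (fun t : ℝ => g t * (t * g t)) c
          hgt (by simp [hg_def]) hgtg (by simp [hg_def]),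
        cfcₙ_mul g (fun t : ℝ => t) c hgc hg0 continuousOn_id rfl,
        cfcₙ_mul g (fun t : ℝ => t * g t) c hgc hg0 htg htg0,
        cfcₙ_id' ℝ c, hmul]
    have hzz : z * star z = cfcₙ (fun t : ℝ => (t - t * g t) - (g t * t - g t * (t * g t))) c := by
      rw [hF, hzstar, hz_def, hc_def]
      noncomm_ring
    have hbound : ‖cfcₙ (fun t : ℝ => (t - t * g t) - (g t * t - g t * (t * g t))) c‖ ≤ ε := by
      apply norm_cfcₙ_le
      intro t ht
      have h0 : 0 ≤ t := hquas t ht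
      have hne' : t + ε ≠ 0 := by positivity
      have hval : (t - t * g t) - (g t * t - g t * (t * g t)) = t * (ε / (t + ε)) ^ 2 := by
        simp only [hg_def]
        field_simp
        ring
      rw [hval, Real.norm_eq_abs, abs_of_nonneg (by positivity)]
      rw [div_pow, mul_div_assoc', div_le_iff₀ (by positivity)]
      nlinarith [sq_nonneg t, sq_nonneg ε, mul_nonneg h0 hε.le]
    calc ‖star x - G * star x‖ ^ 2 = ‖z‖ * ‖z‖ := by rw [← hz_def, pow_two]
      _ = ‖z * star z‖ := (CStarRing.norm_self_mul_star).symm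
      _ ≤ ε := by rw [hzz]; exact hbound
  -- conclude by a limiting argument
  choose y hyI hy using fun n : ℕ => key (1 / (n + 1)) (by positivity)
  have hnorm : ∀ n : ℕ, ‖star x - y n * star x‖ ≤ Real.sqrt (1 / (n + 1)) := by
    intro n
    have := hy n
    calc ‖star x - y n * star x‖
        = Real.sqrt (‖star x - y n * star x‖ ^ 2) := by
          rw [Real.sqrt_sq (norm_nonneg _)]
      _ ≤ Real.sqrt (1 / (n + 1)) := Real.sqrt_le_sqrt this
  have hlim : Tendsto (fun n : ℕ => y n * star x) atTop (nhds (star x)) := by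
    rw [tendsto_iff_norm_sub_tendsto_zero]
    have hsq : Tendsto (fun n : ℕ => Real.sqrt (1 / (n + 1))) atTop (nhds 0) := by
      have h1 : Tendsto (fun n : ℕ => (1 : ℝ) / (n + 1)) atTop (nhds 0) :=
        tendsto_one_div_add_atTop_nhds_zero_nat
      have h2 := (Real.continuous_sqrt.tendsto 0).comp h1
      rw [Real.sqrt_zero] at h2
      exact h2
    apply squeeze_zero (fun n => norm_nonneg _) (fun n => ?_) hsq
    rw [norm_sub_rev]
    exact hnorm n
  exact hI.mem_of_tendsto hlim (Eventually.of_forall fun n => I.mul_mem_right _ _ (hyI n))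

/-- Lemma 4.2: a separable C*-algebra with property (S) has no non-zero unital quotients:
if `I` is a closed two-sided ideal such that `A/I` has a unit (i.e. there is `u ∈ A` with
`u * a ≡ a` and `a * u ≡ a` modulo `I` for all `a`), then `A/I = 0` (i.e. `I = A`). -/
theorem no_unital_quotient [TopologicalSpace.SeparableSpace A]
    (hS : PropS A) (I : TwoSidedIdeal A) (hI : IsClosed (I : Set A))
    (hu : ∃ u : A, ∀ a : A, u * a - a ∈ I ∧ a * u - a ∈ I) :
    ∀ a : A, a ∈ I := by
  obtain ⟨u, hu⟩ := hu
  set a : A := star u * u with ha_def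
  have ha_nonneg : (0:A) ≤ a := star_mul_self_nonneg u
  have ha_sa : IsSelfAdjoint a := .of_nonneg ha_nonneg
  -- `a ≡ u` modulo `I`
  have hus : u * star u - u ∈ I := by
    have h1 : u * star u - star u ∈ I := (hu (star u)).1
    have h2 := star_mem_of_closed I hI h1
    rwa [star_sub, StarMul.star_mul, star_star] at h2
  have hau : a - u ∈ I := by
    have h2 : star u * u - star u ∈ I := (hu (star u)).2
    have h3 : star u - u ∈ I := by
      have h4 := I.sub_mem (hu (star u)).1 hus
      have h5 : (u * star u - star u) - (u * star u - u) = u - star u := by abel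
      rw [h5] at h4
      have := I.neg_mem h4
      simpa using this
    have h6 := I.add_mem h2 h3
    rwa [sub_add_sub_cancel] at h6
  -- functions for the functional calculus
  set f : ℝ → ℝ := fun t => max 0 (2 * t - 1) with hf_def
  set g : ℝ → ℝ := fun t => (min t 2⁻¹) / (1 - min t 2⁻¹) with hg_def
  set g' : ℝ → ℝ := fun t => min 1 (max 0 (4 * t - 1)) with hg'_def
  have hgden : ∀ t : ℝ, 1 - min t 2⁻¹ ≠ 0 := by
    intro t
    have : min t 2⁻¹ ≤ 2⁻¹ := min_le_right _ _
    intro h; rw [sub_eq_zero] at h; rw [← h] at this; norm_num at this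
  have hfc : Continuous f := continuous_const.max (by fun_prop)
  have hgc : Continuous g :=
    Continuous.div (continuous_id.min continuous_const)
      (continuous_const.sub (continuous_id.min continuous_const)) hgden
  have hg'c : Continuous g' := continuous_const.min (continuous_const.max (by fun_prop))
  have hf0 : f 0 = 0 := by norm_num [hf_def]
  have hg0 : g 0 = 0 := by norm_num [hg_def]
  have hg'0 : g' 0 = 0 := by norm_num [hg'_def]
  have key1 : ∀ t : ℝ, f t - t = t * g t - g t := by
    intro t
    rcases le_total t 2⁻¹ with ht | ht
    · have hmin : min t 2⁻¹ = t := min_eq_left ht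
      have hmax : max 0 (2 * t - 1) = 0 := max_eq_left (by linarith)
      have h1t : (1:ℝ) - t ≠ 0 := by intro h; rw [sub_eq_zero] at h; rw [← h] at ht; norm_num at ht
      simp only [hf_def, hg_def, hmin, hmax]
      field_simp
      ring
    · have hmin : min t 2⁻¹ = 2⁻¹ := min_eq_right ht
      have hmax : max 0 (2 * t - 1) = 2 * t - 1 := max_eq_right (by linarith)
      simp only [hf_def, hg_def, hmin, hmax]
      norm_num
      ring
  have key2 : ∀ t : ℝ, g' t * f t = f t := by
    intro t
    rcases le_total t 2⁻¹ with ht | ht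
    · have hmax : max 0 (2 * t - 1) = 0 := max_eq_left (by linarith)
      simp only [hf_def, hg'_def, hmax, mul_zero]
    · have hmax4 : max 0 (4 * t - 1) = 4 * t - 1 := max_eq_right (by linarith)
      have hmin1 : min 1 (4 * t - 1) = 1 := min_eq_left (by linarith)
      have hmax : max 0 (2 * t - 1) = 2 * t - 1 := max_eq_right (by linarith)
      simp only [hf_def, hg'_def, hmax4, hmin1, hmax, one_mul]
  set h : A := cfcₙ f a with hh_def
  set G : A := cfcₙ g a with hG_def
  set e : A := cfcₙ g' a with he_def
  have hh_nonneg : (0:A) ≤ h := cfcₙ_nonneg fun t _ => le_max_left _ _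
  have he_nonneg : (0:A) ≤ e := cfcₙ_nonneg fun t _ => le_min (by norm_num [hg'_def]) (le_max_left _ _)
  have heh : e * h = h := by
    have hm := cfcₙ_mul g' f a hg'c.continuousOn hg'0 hfc.continuousOn hf0
    rw [show (fun t => g' t * f t) = f from funext key2] at hm
    rw [he_def, hh_def, ← hm]
  -- h - a = a * G - G
  have htg : ContinuousOn (fun t : ℝ => t * g t) (quasispectrum ℝ a) :=
    (continuous_id.mul hgc).continuousOn
  have htg0 : (fun t : ℝ => t * g t) 0 = 0 := by simp [hg0]
  have hmulidg : cfcₙ (fun t : ℝ => t * g t) a = a * G := by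
    rw [cfcₙ_mul (fun t : ℝ => t) g a continuousOn_id rfl hgc.continuousOn hg0,
      cfcₙ_id' ℝ a]
  have hstep : h - a = a * G - G := by
    have e1 : cfcₙ (fun t : ℝ => f t - t) a = h - a := by
      rw [cfcₙ_sub f (fun t : ℝ => t) a hfc.continuousOn hf0 continuousOn_id rfl,
        cfcₙ_id' ℝ a]
    have e2 : cfcₙ (fun t : ℝ => t * g t - g t) a = a * G - G := by
      rw [cfcₙ_sub (fun t : ℝ => t * g t) g a htg htg0 hgc.continuousOn hg0, hmulidg]
    rw [← e1, ← e2, show (fun t : ℝ => f t - t) = (fun t : ℝ => t * g t - g t) from funext key1]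
  have hha : h - a ∈ I := by
    rw [hstep, show a * G - G = (a - u) * G + (u * G - G) by noncomm_ring]
    exact I.add_mem (I.mul_mem_right _ _ hau) (hu G).1
  have hhu : h - u ∈ I := by
    have := I.add_mem hha hau
    rwa [sub_add_sub_cancel] at this
  -- apply property (S)
  obtain ⟨b, hb_nonneg, hhb, hprec⟩ := hS h ⟨hh_nonneg, e, he_nonneg, heh⟩
  obtain ⟨k, x, hx⟩ := hprec
  -- b ∈ I
  have hub : u * b ∈ I := by
    have h1 : (h - u) * b ∈ I := I.mul_mem_right _ _ hhu
    rw [sub_mul, hhb, zero_sub] at h1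
    simpa using I.neg_mem h1
  have hb_mem : b ∈ I := by
    have := I.sub_mem hub (hu b).1
    simpa using this
  -- entries of the conjugates lie in I
  have hDmem : ∀ m l : Fin (k + 1), tensorOne b (k + 1) m l ∈ I := by
    intro m l
    rcases eq_or_ne m l with rfl | hml
    · simpa [tensorOne, Matrix.diagonal_apply_eq] using hb_mem
    · simp only [tensorOne, Matrix.diagonal_apply_ne _ hml]
      exact I.zero_mem
  have hmem : ∀ j : ℕ,
      ((x j)ᴴ * tensorOne b (k + 1) * x j) 0 0 ∈ I := by
    intro j
    rw [Matrix.mul_apply]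
    refine sum_mem fun l _ => ?_
    refine I.mul_mem_right _ _ ?_
    rw [Matrix.mul_apply]
    exact sum_mem fun m _ => I.mul_mem_left _ _ (hDmem m l)
  -- pass to the limit in the (0,0) entry
  have hten : Tendsto (fun j => ((x j)ᴴ * tensorOne b (k + 1) * x j) 0 0)
      atTop (nhds ((tensorOne h (k + 2)) 0 0)) := by
    have hcont : Continuous fun M : Matrix (Fin (k + 2)) (Fin (k + 2)) A => M 0 0 :=
      continuous_id.matrix_elem 0 0
    exact (hcont.tendsto _).comp hx
  have h00 : (tensorOne h (k + 2)) (0 : Fin (k + 2)) (0 : Fin (k + 2)) = h :=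
    Matrix.diagonal_apply_eq _ _
  rw [h00] at hten
  have hh_mem_I : h ∈ I := hI.mem_of_tendsto hten (Eventually.of_forall hmem)
  -- conclude
  have hu_mem : u ∈ I := by
    have := I.sub_mem hh_mem_I hhu
    simpa using this
  intro w
  have := I.sub_mem (I.mul_mem_right u w hu_mem) (hu w).1
  simpa using this

end Stmt15
end
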